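/- arXiv:1209.4398 — 8 statements merged into one kernel-verified Lean document; each statement's English description precedes it below -/
import Mathlib

section
/- Let Γ = (C, X, H, I, η, E) be an admissible Galois structure. Then the reflector I : C → X preserves every pullback square in which one of the two legs being pulled back is a trivial covering. -/
open CategoryTheory CategoryTheory.Limits

universe v u v' u'

namespace GaloisPaper

variable {C : Type u} [Category.{v} C]

/-- The class `E¹` of "double extensions" relative to a class `F` of morphisms:
a commutative square (i.e. a morphism `σ : a ⟶ b` of the arrow category) with all
four arrows in `F`, such that the comparison morphism to the pullback lies in `F`. -/
def InE1 (F : MorphismProperty C) : MorphismProperty (Arrow C) := fun a b σ =>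
  F a.hom ∧ F b.hom ∧ F σ.left ∧ F σ.right ∧
    ∃ (P : C) (p₁ : P ⟶ a.right) (p₂ : P ⟶ b.left) (l : a.left ⟶ P),
      IsPullback p₁ p₂ σ.right b.hom ∧ l ≫ p₁ = a.hom ∧ l ≫ p₂ = σ.left ∧ F l

/-- (E1): `F` contains all isomorphisms (between objects satisfying `O`). -/
def CondE1 (O : C → Prop) (F : MorphismProperty C) : Prop :=
  ∀ ⦃a b : C⦄ (σ : a ⟶ b), O a → O b → IsIso σ → F σ

/-- (E2): `F` is pullback-stable: pullbacks of morphisms of `F` along arbitrary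
morphisms (between objects satisfying `O`) exist and lie in `F`. -/
def CondE2 (O : C → Prop) (F : MorphismProperty C) : Prop :=
  ∀ ⦃a b : C⦄ (σ : a ⟶ b), F σ → ∀ ⦃c : C⦄ (g : c ⟶ b), O c →
    (∃ (d : C) (q₁ : d ⟶ a) (q₂ : d ⟶ c), O d ∧ IsPullback q₁ q₂ σ g ∧ F q₂) ∧
    (∀ ⦃d : C⦄ (q₁ : d ⟶ a) (q₂ : d ⟶ c), O d → IsPullback q₁ q₂ σ g → F q₂)

/-- (E3): `F` is closed under composition. -/
def CondE3 (F : MorphismProperty C) : Prop :=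
  ∀ ⦃a b c : C⦄ (σ : a ⟶ b) (τ : b ⟶ c), F σ → F τ → F (σ ≫ τ)

/-- (E4): if `σ ≫ τ ∈ F` then `τ ∈ F`. -/
def CondE4 (O : C → Prop) (F : MorphismProperty C) : Prop :=
  ∀ ⦃a b c : C⦄ (σ : a ⟶ b) (τ : b ⟶ c), O a → O b → O c → F (σ ≫ τ) → F τ

/-- (E5): every split epimorphism of `Ext(C)` (i.e. every morphism of the arrow
category between `F`-arrows admitting a section) lies in `F¹`. -/
def CondE5 (F : MorphismProperty C) : Prop :=
  ∀ ⦃a b : Arrow C⦄ (σ : a ⟶ b) (τ : b ⟶ a), τ ≫ σ = 𝟙 b → F a.hom → F b.hom → InE1 F σ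

/-- `(C ↓ B)`: the full subcategory of `Over B` on morphisms in `F`. -/
def EOver (F : MorphismProperty C) (B : C) :=
  ObjectProperty.FullSubcategory (fun f : Over B => F f.hom)

instance (F : MorphismProperty C) (B : C) : Category (EOver F B) :=
  ObjectProperty.FullSubcategory.category _

/-- `Σ_p`: composition with `p`, as a functor `(C ↓ A) ⥤ (C ↓ B)`. -/
def eMap (F : MorphismProperty C) {A B : C} (p : A ⟶ B)
    (hcomp : ∀ ⦃Z : C⦄ (f : Z ⟶ A), F f → F (f ≫ p)) : EOver F A ⥤ EOver F B :=
  ObjectProperty.lift _ (ObjectProperty.ι _ ⋙ Over.map p)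
    (fun f => hcomp f.obj.hom f.property)

/-- `p` is a monadic extension (effective `F`-descent morphism): `p ∈ F` and the
pullback functor `p* : (C ↓ B) ⥤ (C ↓ A)` (i.e. the right adjoint of `Σ_p`) is monadic. -/
def IsMonadicExt (F : MorphismProperty C) {A B : C} (p : A ⟶ B) : Prop :=
  F p ∧ ∃ (hcomp : ∀ ⦃Z : C⦄ (f : Z ⟶ A), F f → F (f ≫ p))
    (G : EOver F B ⥤ EOver F A) (_ : eMap F p hcomp ⊣ G),
    Nonempty (MonadicRightAdjoint G)

/-- `u : e ⟶ r` exhibits `r` as a reflection of `e` into the full subcategory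
determined by `P`. -/
def IsReflectionInto {D : Type u'} [Category.{v'} D] (P : D → Prop) {e r : D}
    (u : e ⟶ r) : Prop :=
  P r ∧ ∀ ⦃a : D⦄, P a → ∀ k : e ⟶ a, ∃! m : r ⟶ a, u ≫ m = k

/-- A Galois structure `(C, X, H, I, η, E)` as in Janelidze–Kelly: a full replete
reflective subcategory together with a class `E` satisfying (E1)–(E3) and (G). -/
structure GaloisStructure (C : Type u) [Category.{v} C] (X : Type u') [Category.{v'} X] where
  H : X ⥤ C
  I : C ⥤ X
  adj : I ⊣ H
  hFull : H.Full
  hFaithful : H.Faithful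
  E : MorphismProperty C
  hE1 : CondE1 (fun _ => True) E
  hE2 : CondE2 (fun _ => True) E
  hE3 : CondE3 E
  hG : ∀ ⦃A B : C⦄ (f : A ⟶ B), E f → E (H.map (I.map f))

namespace GaloisStructure

variable {X : Type u'} [Category.{v'} X] (Γ : GaloisStructure C X)

/-- The component `η_A : A ⟶ HI(A)` of the reflection unit. -/
def unitApp (A : C) : A ⟶ Γ.H.obj (Γ.I.obj A) := Γ.adj.unit.app A

/-- A trivial covering: `f ∈ E` whose `η`-naturality square is a pullback. -/
def TrivCov {A B : C} (f : A ⟶ B) : Prop :=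
  Γ.E f ∧ IsPullback (Γ.unitApp A) f (Γ.H.map (Γ.I.map f)) (Γ.unitApp B)

/-- `f` is split by `p`: the pullback `p*(f)` of `f` along `p` is a trivial covering. -/
def IsSplitBy {A B E' : C} (f : A ⟶ B) (p : E' ⟶ B) : Prop :=
  ∀ ⦃P : C⦄ (p₁ : P ⟶ A) (p₂ : P ⟶ E'), IsPullback p₁ p₂ f p → Γ.TrivCov p₂

/-- A covering (central extension): a morphism of `E` split by some monadic extension. -/
def Covering {A B : C} (f : A ⟶ B) : Prop :=
  Γ.E f ∧ ∃ (E' : C) (p : E' ⟶ B), IsMonadicExt Γ.E p ∧ Γ.IsSplitBy f p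

/-- A normal extension: a monadic extension split by itself. -/
def NormalExt {A B : C} (p : A ⟶ B) : Prop :=
  IsMonadicExt Γ.E p ∧ Γ.IsSplitBy p p

/-- (M): every morphism of `E` is a monadic extension. -/
def CondM : Prop := ∀ ⦃A B : C⦄ (p : A ⟶ B), Γ.E p → IsMonadicExt Γ.E p

/-- Admissibility of the Galois structure: the right adjoints
`H^B : (X ↓ I(B)) ⥤ (C ↓ B)` are fully faithful.  Equivalently (and this is how we
state it), for every `φ : x ⟶ I(B)` with `H(φ) ∈ E` and every pullback of `H(φ)`
along `η_B`, the corresponding component of the counit of `I^B ⊣ H^B`, i.e. the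
adjoint transpose `I(A) ⟶ x` of `t : A ⟶ H(x)`, is an isomorphism. -/
def Admissible : Prop :=
  ∀ ⦃B : C⦄ ⦃x : X⦄ (φ : x ⟶ Γ.I.obj B), Γ.E (Γ.H.map φ) →
    ∀ ⦃A : C⦄ (t : A ⟶ Γ.H.obj x) (f : A ⟶ B),
      IsPullback t f (Γ.H.map φ) (Γ.unitApp B) →
      IsIso ((Γ.adj.homEquiv A x).symm t)

/-- The `η`-naturality square at `f`, as a morphism of the arrow category. -/
def unitSq {A B : C} (f : A ⟶ B) : Arrow.mk f ⟶ Arrow.mk (Γ.H.map (Γ.I.map f)) :=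
  Arrow.homMk (u := Γ.unitApp A) (v := Γ.unitApp B)
    (by simp [unitApp])

/-- (B): `X` is a strongly `E`-Birkhoff subcategory of `C`: every `η`-naturality
square at a morphism of `E` lies in `E¹`. -/
def StronglyBirkhoff : Prop :=
  ∀ ⦃A B : C⦄ (f : A ⟶ B), Γ.E f → InE1 Γ.E (Γ.unitSq f)

/-- `I` preserves pullbacks of morphisms of `E` along split epimorphisms of `E`. -/
def PreservesSplitPullbacks : Prop :=
  ∀ ⦃D' A B C' : C⦄ (t : D' ⟶ A) (h : D' ⟶ C') (f : A ⟶ B) (g : C' ⟶ B),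
    IsPullback t h f g → Γ.E f → Γ.E g → IsSplitEpi g →
    IsPullback (Γ.I.map t) (Γ.I.map h) (Γ.I.map f) (Γ.I.map g)

end GaloisStructure

/-- The class of regular epimorphisms. -/
def regEpi (C : Type u) [Category.{v} C] : MorphismProperty C :=
  fun _ _ f => Nonempty (RegularEpi f)

/-- A pair of parallel morphisms is jointly monic. -/
def JointlyMono {R A : C} (d₀ d₁ : R ⟶ A) : Prop :=
  ∀ ⦃T : C⦄ (x y : T ⟶ R), x ≫ d₀ = y ≫ d₀ → x ≫ d₁ = y ≫ d₁ → x = y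

/-- An internal reflexive relation (given by its jointly monic pair of projections). -/
def IsReflexiveRel {R A : C} (d₀ d₁ : R ⟶ A) : Prop :=
  JointlyMono d₀ d₁ ∧ ∃ r : A ⟶ R, r ≫ d₀ = 𝟙 A ∧ r ≫ d₁ = 𝟙 A

/-- An internal equivalence relation. -/
def IsEquivRel {R A : C} (d₀ d₁ : R ⟶ A) : Prop :=
  IsReflexiveRel d₀ d₁ ∧ (∃ s : R ⟶ R, s ≫ d₀ = d₁ ∧ s ≫ d₁ = d₀) ∧
    ∀ ⦃T : C⦄ (x y : T ⟶ R), x ≫ d₁ = y ≫ d₀ →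
      ∃ t : T ⟶ R, t ≫ d₀ = x ≫ d₀ ∧ t ≫ d₁ = y ≫ d₁

/-- A Mal'tsev category: every internal reflexive relation is an equivalence relation. -/
def IsMaltsevCat (C : Type u) [Category.{v} C] : Prop :=
  ∀ ⦃A R : C⦄ (d₀ d₁ : R ⟶ A), IsReflexiveRel d₀ d₁ → IsEquivRel d₀ d₁

/-- A regular category: finite limits (assumed separately), regular epi–mono
factorisations, and pullback-stability of regular epimorphisms. -/
structure IsRegularCategory (C : Type u) [Category.{v} C] : Prop where
  factor : ∀ ⦃A B : C⦄ (f : A ⟶ B), ∃ (I' : C) (e : A ⟶ I') (m : I' ⟶ B),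
    f = e ≫ m ∧ Nonempty (RegularEpi e) ∧ Mono m
  stable : ∀ ⦃P' X' Y' Z' : C⦄ (p₁ : P' ⟶ X') (p₂ : P' ⟶ Y') (f : X' ⟶ Z') (g : Y' ⟶ Z'),
    IsPullback p₁ p₂ f g → Nonempty (RegularEpi f) → Nonempty (RegularEpi p₂)

/-- A Barr-exact category: regular, and every internal equivalence relation is
effective (i.e. a kernel pair). -/
def IsBarrExact (C : Type u) [Category.{v} C] : Prop :=
  IsRegularCategory C ∧ ∀ ⦃A R : C⦄ (d₀ d₁ : R ⟶ A), IsEquivRel d₀ d₁ →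
    ∃ (Q : C) (q : A ⟶ Q), IsPullback d₀ d₁ q q

/-- A Birkhoff subcategory: a full reflective subcategory closed under subobjects
and regular quotient objects. -/
structure IsBirkhoff {X : Type u'} [Category.{v'} X] (H : X ⥤ C) (I : C ⥤ X)
    (adj : I ⊣ H) : Prop where
  full : H.Full
  faithful : H.Faithful
  closedSub : ∀ (x : X) (A : C) (m : A ⟶ H.obj x), Mono m → ∃ y : X, Nonempty (A ≅ H.obj y)
  closedQuot : ∀ (x : X) (A : C) (e : H.obj x ⟶ A), Nonempty (RegularEpi e) →
    ∃ y : X, Nonempty (A ≅ H.obj y)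

/-- The category `Ext(C)` of `F`-morphisms. -/
def ExtCat (F : MorphismProperty C) := ObjectProperty.FullSubcategory (fun a : Arrow C => F a.hom)

instance (F : MorphismProperty C) : Category (ExtCat F) := ObjectProperty.FullSubcategory.category _

/-- The restriction of `F¹` to the category `Ext(C)`. -/
def ExtE1 (F : MorphismProperty C) : MorphismProperty (ExtCat F) :=
  fun _ _ σ => InE1 F ((ObjectProperty.ι _).map σ)


section AuxStatement0

variable {C : Type u} [Category.{v} C] {X : Type u'} [Category.{v'} X]
  (Γ : GaloisStructure C X)

/-- Naturality of the unit. -/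
lemma GaloisStructure.aux_unit_nat {A B : C} (f : A ⟶ B) :
    f ≫ Γ.unitApp B = Γ.unitApp A ≫ Γ.H.map (Γ.I.map f) := by
  simpa [GaloisStructure.unitApp] using Γ.adj.unit.naturality f

/-- Precomposition with the unit is injective on morphisms coming from `X`. -/
lemma GaloisStructure.aux_unit_comp_H_inj {A : C} {y : X} {k k' : Γ.I.obj A ⟶ y}
    (hk : Γ.unitApp A ≫ Γ.H.map k = Γ.unitApp A ≫ Γ.H.map k') : k = k' := by
  apply (Γ.adj.homEquiv A y).injective
  rw [Adjunction.homEquiv_unit, Adjunction.homEquiv_unit]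
  exact hk

/-- The unit is an isomorphism at objects of the form `H x`. -/
lemma GaloisStructure.aux_unitApp_H_isIso (x : X) : IsIso (Γ.unitApp (Γ.H.obj x)) := by
  haveI := Γ.hFull; haveI := Γ.hFaithful
  have tri : Γ.unitApp (Γ.H.obj x) ≫ Γ.H.map (Γ.adj.counit.app x) = 𝟙 _ :=
    Γ.adj.right_triangle_components x
  haveI : IsIso (Γ.adj.counit.app x) := inferInstance
  haveI : IsIso (Γ.unitApp (Γ.H.obj x) ≫ Γ.H.map (Γ.adj.counit.app x)) := by
    rw [tri]; infer_instance
  exact IsIso.of_isIso_comp_right (Γ.unitApp (Γ.H.obj x)) (Γ.H.map (Γ.adj.counit.app x))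

/-- The full reflective subcategory is closed under pullbacks computed in `C`:
the unit is invertible at the vertex of any pullback of morphisms of `X`. -/
lemma GaloisStructure.aux_unit_isIso_of_pullback {x y z : X} {u : x ⟶ z} {v : y ⟶ z} {P : C}
    {q₁ : P ⟶ Γ.H.obj x} {q₂ : P ⟶ Γ.H.obj y}
    (hP : IsPullback q₁ q₂ (Γ.H.map u) (Γ.H.map v)) : IsIso (Γ.unitApp P) := by
  haveI := Γ.hFull; haveI := Γ.hFaithful
  haveI := Γ.aux_unitApp_H_isIso x
  haveI := Γ.aux_unitApp_H_isIso y
  haveI := Γ.aux_unitApp_H_isIso z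
  have w : (Γ.H.map (Γ.I.map q₁) ≫ inv (Γ.unitApp (Γ.H.obj x))) ≫ Γ.H.map u =
      (Γ.H.map (Γ.I.map q₂) ≫ inv (Γ.unitApp (Γ.H.obj y))) ≫ Γ.H.map v := by
    have n1 : inv (Γ.unitApp (Γ.H.obj x)) ≫ Γ.H.map u =
        Γ.H.map (Γ.I.map (Γ.H.map u)) ≫ inv (Γ.unitApp (Γ.H.obj z)) := by
      rw [IsIso.inv_comp_eq, ← Category.assoc, ← Γ.aux_unit_nat (Γ.H.map u),
        Category.assoc, IsIso.hom_inv_id, Category.comp_id]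
    have n2 : inv (Γ.unitApp (Γ.H.obj y)) ≫ Γ.H.map v =
        Γ.H.map (Γ.I.map (Γ.H.map v)) ≫ inv (Γ.unitApp (Γ.H.obj z)) := by
      rw [IsIso.inv_comp_eq, ← Category.assoc, ← Γ.aux_unit_nat (Γ.H.map v),
        Category.assoc, IsIso.hom_inv_id, Category.comp_id]
    rw [Category.assoc, Category.assoc, n1, n2, ← Category.assoc, ← Category.assoc,
      ← Γ.H.map_comp, ← Γ.I.map_comp, ← Γ.H.map_comp, ← Γ.I.map_comp, hP.w]
  set r : Γ.H.obj (Γ.I.obj P) ⟶ P := hP.lift _ _ w with hr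
  have hr₁ : r ≫ q₁ = Γ.H.map (Γ.I.map q₁) ≫ inv (Γ.unitApp (Γ.H.obj x)) := hP.lift_fst _ _ w
  have hr₂ : r ≫ q₂ = Γ.H.map (Γ.I.map q₂) ≫ inv (Γ.unitApp (Γ.H.obj y)) := hP.lift_snd _ _ w
  have left : Γ.unitApp P ≫ r = 𝟙 P := by
    apply hP.hom_ext
    · rw [Category.assoc, hr₁, ← Category.assoc, ← Γ.aux_unit_nat q₁, Category.assoc,
        IsIso.hom_inv_id, Category.comp_id, Category.id_comp]
    · rw [Category.assoc, hr₂, ← Category.assoc, ← Γ.aux_unit_nat q₂, Category.assoc,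
        IsIso.hom_inv_id, Category.comp_id, Category.id_comp]
  have right : r ≫ Γ.unitApp P = 𝟙 _ := by
    obtain ⟨k, hk⟩ := Γ.H.map_surjective (r ≫ Γ.unitApp P)
    rw [← hk]
    have : k = 𝟙 (Γ.I.obj P) := by
      apply Γ.aux_unit_comp_H_inj
      rw [hk, ← Category.assoc, left, Category.id_comp, Γ.H.map_id, Category.comp_id]
    rw [this, Γ.H.map_id]
  exact ⟨r, left, right⟩

end AuxStatement0

/-- If `Γ` is an admissible Galois structure, then the reflector `I`
preserves every pullback square in which one of the legs being pulled back is a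
trivial covering. -/
theorem statement_0 {C : Type u} [Category.{v} C] {X : Type u'} [Category.{v'} X]
    (Γ : GaloisStructure C X) (hadm : Γ.Admissible)
    {D A B C' : C} (t : D ⟶ A) (h : D ⟶ C') (f : A ⟶ B) (g : C' ⟶ B)
    (sq : IsPullback t h f g) (hf : Γ.TrivCov f) :
    IsPullback (Γ.I.map t) (Γ.I.map h) (Γ.I.map f) (Γ.I.map g) := by
  haveI := Γ.hFull; haveI := Γ.hFaithful
  -- the pullback `P` of `HI f` along `HI g`
  have hHIf : Γ.E (Γ.H.map (Γ.I.map f)) := Γ.hG f hf.1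
  obtain ⟨⟨P, q₁, q₂, -, hPpb, hq₂⟩, -⟩ :=
    Γ.hE2 _ hHIf (Γ.H.map (Γ.I.map g)) trivial
  -- the outer pullback
  have outer : IsPullback (t ≫ Γ.unitApp A) h (Γ.H.map (Γ.I.map f))
      (Γ.unitApp C' ≫ Γ.H.map (Γ.I.map g)) := by
    rw [← Γ.aux_unit_nat g]
    exact sq.paste_horiz hf.2
  -- the comparison `l : D ⟶ P`
  have wl : (t ≫ Γ.unitApp A) ≫ Γ.H.map (Γ.I.map f) =
      (h ≫ Γ.unitApp C') ≫ Γ.H.map (Γ.I.map g) := by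
    simpa [Category.assoc] using outer.w
  set l : D ⟶ P := hPpb.lift _ _ wl with hl
  have hl₁ : l ≫ q₁ = t ≫ Γ.unitApp A := hPpb.lift_fst _ _ wl
  have hl₂ : l ≫ q₂ = h ≫ Γ.unitApp C' := hPpb.lift_snd _ _ wl
  have hleft : IsPullback l h q₂ (Γ.unitApp C') := by
    apply IsPullback.of_right _ hl₂ hPpb
    rw [hl₁]; exact outer
  -- `P` lies in the subcategory
  haveI hηP : IsIso (Γ.unitApp P) := Γ.aux_unit_isIso_of_pullback hPpb
  -- the morphism `φ : I P ⟶ I C'` with `η_P ≫ H φ = q₂`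
  set φ : Γ.I.obj P ⟶ Γ.I.obj C' := (Γ.adj.homEquiv P (Γ.I.obj C')).symm q₂ with hφdef
  have hφ : Γ.unitApp P ≫ Γ.H.map φ = q₂ := by
    have := (Γ.adj.homEquiv P (Γ.I.obj C')).apply_symm_apply q₂
    rwa [Adjunction.homEquiv_unit] at this
  have hEφ : Γ.E (Γ.H.map φ) := by
    have : Γ.H.map φ = inv (Γ.unitApp P) ≫ q₂ := by rw [IsIso.eq_inv_comp, hφ]
    rw [this]
    exact Γ.hE3 _ _ (Γ.hE1 _ trivial trivial inferInstance) hq₂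
  -- the shifted left square, a pullback of `H φ` along `η_{C'}`
  have hshift : IsPullback (l ≫ Γ.unitApp P) h (Γ.H.map φ) (Γ.unitApp C') := by
    apply hleft.of_iso (Iso.refl D) (asIso (Γ.unitApp P)) (Iso.refl C')
      (Iso.refl (Γ.H.obj (Γ.I.obj C')))
    · simp
    · simp
    · simpa using hφ.symm
    · simp
  -- admissibility: the transpose `σ : I D ⟶ I P` is an isomorphism
  have hσ : IsIso ((Γ.adj.homEquiv D (Γ.I.obj P)).symm (l ≫ Γ.unitApp P)) :=
    hadm φ hEφ (l ≫ Γ.unitApp P) h hshift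
  set σ : Γ.I.obj D ⟶ Γ.I.obj P :=
    (Γ.adj.homEquiv D (Γ.I.obj P)).symm (l ≫ Γ.unitApp P) with hσdef
  have hσtr : Γ.unitApp D ≫ Γ.H.map σ = l ≫ Γ.unitApp P := by
    have := (Γ.adj.homEquiv D (Γ.I.obj P)).apply_symm_apply (l ≫ Γ.unitApp P)
    rwa [Adjunction.homEquiv_unit] at this
  -- the comparison `m : HID ⟶ P` and the proof that it is `H σ ≫ (η_P)⁻¹`
  have wm : Γ.H.map (Γ.I.map t) ≫ Γ.H.map (Γ.I.map f) =
      Γ.H.map (Γ.I.map h) ≫ Γ.H.map (Γ.I.map g) := by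
    rw [← Γ.H.map_comp, ← Γ.I.map_comp, ← Γ.H.map_comp, ← Γ.I.map_comp, sq.w]
  set m : Γ.H.obj (Γ.I.obj D) ⟶ P := hPpb.lift _ _ wm with hm
  have hm₁ : m ≫ q₁ = Γ.H.map (Γ.I.map t) := hPpb.lift_fst _ _ wm
  have hm₂ : m ≫ q₂ = Γ.H.map (Γ.I.map h) := hPpb.lift_snd _ _ wm
  have hηm : Γ.unitApp D ≫ m = l := by
    apply hPpb.hom_ext
    · rw [Category.assoc, hm₁, ← Γ.aux_unit_nat t, hl₁]
    · rw [Category.assoc, hm₂, ← Γ.aux_unit_nat h, hl₂]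
  have hmη : m ≫ Γ.unitApp P = Γ.H.map σ := by
    obtain ⟨k, hk⟩ := Γ.H.map_surjective (m ≫ Γ.unitApp P)
    have : k = σ := by
      apply Γ.aux_unit_comp_H_inj
      rw [hk, ← Category.assoc, hηm, hσtr]
    rw [← hk, this]
  haveI : IsIso (Γ.H.map σ) := inferInstance
  haveI : IsIso (m ≫ Γ.unitApp P) := by rw [hmη]; infer_instance
  haveI hmiso : IsIso m := IsIso.of_isIso_comp_right m (Γ.unitApp P)
  -- hence the image of the square under `HI` is a pullback
  have hHpb : IsPullback (Γ.H.map (Γ.I.map t)) (Γ.H.map (Γ.I.map h))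
      (Γ.H.map (Γ.I.map f)) (Γ.H.map (Γ.I.map g)) := by
    apply hPpb.of_iso (asIso m).symm (Iso.refl _) (Iso.refl _) (Iso.refl _)
    · simp [← hm₁]
    · simp [← hm₂]
    · simp
    · simp
  -- and `H` reflects pullbacks
  have wmX : Γ.I.map t ≫ Γ.I.map f = Γ.I.map h ≫ Γ.I.map g := by
    rw [← Γ.I.map_comp, ← Γ.I.map_comp, sq.w]
  exact IsPullback.of_map Γ.H wmX hHpb

end GaloisPaper
end

section
/- Let Γ be an admissible Galois structure in which every morphism of E is a monadic extension (effective E-descent morphism). Then coverings are pullback-stable: if f : A → B is a covering and g : C → B is any morphism, then the pullback of f along g is a covering of C. -/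
open CategoryTheory CategoryTheory.Limits

universe v u v' u'

namespace GaloisPaper

variable {C : Type u} [Category.{v} C]

/-- Auxiliary: for an admissible Galois structure, trivial coverings are
pullback-stable. -/
lemma trivCov_pullback {X : Type u'} [Category.{v'} X]
    (Γ : GaloisStructure C X) (hadm : Γ.Admissible)
    {Q E₀ F' P : C} {s : Q ⟶ E₀} (hs : Γ.TrivCov s)
    {w : F' ⟶ E₀} {p₁ : P ⟶ Q} {p₂ : P ⟶ F'} (hP : IsPullback p₁ p₂ s w) :
    Γ.TrivCov p₂ := by
  have hEp₂ : Γ.E p₂ := (Γ.hE2 s hs.1 w trivial).2 p₁ p₂ trivial hP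
  have hEHIp₂ : Γ.E (Γ.H.map (Γ.I.map p₂)) := Γ.hG p₂ hEp₂
  -- the pullback of `H(I p₂)` along `η_{F'}`
  obtain ⟨Pt, t', f', -, hPt, -⟩ :=
    (Γ.hE2 (Γ.H.map (Γ.I.map p₂)) hEHIp₂ (Γ.unitApp F') trivial).1
  -- admissibility: the transpose of `t'` is an isomorphism
  set θ : Γ.I.obj Pt ⟶ Γ.I.obj P := (Γ.adj.homEquiv Pt (Γ.I.obj P)).symm t' with hθdef
  have hθ : IsIso θ := hadm (Γ.I.map p₂) hEHIp₂ t' f' hPt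
  have ht' : Γ.adj.unit.app Pt ≫ Γ.H.map θ = t' := by
    have := (Γ.adj.homEquiv Pt (Γ.I.obj P)).apply_symm_apply t'
    rwa [Adjunction.homEquiv_unit] at this
  -- naturality squares of the unit
  have nat : ∀ {Y Z : C} (k : Y ⟶ Z),
      k ≫ Γ.adj.unit.app Z = Γ.adj.unit.app Y ≫ Γ.H.map (Γ.I.map k) := by
    intro Y Z k; exact Γ.adj.unit.naturality k
  -- the comparison morphism `u : P ⟶ Pt`
  have hucomm : Γ.adj.unit.app P ≫ Γ.H.map (Γ.I.map p₂) = p₂ ≫ Γ.unitApp F' :=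
    (nat p₂).symm
  set u : P ⟶ Pt := hPt.lift (Γ.adj.unit.app P) p₂ hucomm with hudef
  have hut : u ≫ t' = Γ.adj.unit.app P := hPt.lift_fst _ _ _
  have huf : u ≫ f' = p₂ := hPt.lift_snd _ _ _
  -- the inverse `v : Pt ⟶ P`
  have hsq2 : IsPullback (Γ.unitApp Q) s (Γ.H.map (Γ.I.map s)) (Γ.unitApp E₀) := hs.2
  have hv'comm : (t' ≫ Γ.H.map (Γ.I.map p₁)) ≫ Γ.H.map (Γ.I.map s)
      = (f' ≫ w) ≫ Γ.unitApp E₀ := by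
    have e1 : Γ.H.map (Γ.I.map p₁) ≫ Γ.H.map (Γ.I.map s)
        = Γ.H.map (Γ.I.map p₂) ≫ Γ.H.map (Γ.I.map w) := by
      rw [← Γ.H.map_comp, ← Γ.I.map_comp, ← Γ.H.map_comp, ← Γ.I.map_comp, hP.w]
    have e2 : w ≫ Γ.unitApp E₀ = Γ.unitApp F' ≫ Γ.H.map (Γ.I.map w) := nat w
    rw [Category.assoc, e1, ← Category.assoc, hPt.w, Category.assoc, Category.assoc, e2]
  set v' : Pt ⟶ Q := hsq2.lift (t' ≫ Γ.H.map (Γ.I.map p₁)) (f' ≫ w) hv'comm with hv'def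
  have hv'η : v' ≫ Γ.unitApp Q = t' ≫ Γ.H.map (Γ.I.map p₁) := hsq2.lift_fst _ _ _
  have hv's : v' ≫ s = f' ≫ w := hsq2.lift_snd _ _ _
  set v : Pt ⟶ P := hP.lift v' f' hv's with hvdef
  have hvp₁ : v ≫ p₁ = v' := hP.lift_fst _ _ _
  have hvp₂ : v ≫ p₂ = f' := hP.lift_snd _ _ _
  -- `u ≫ v = 𝟙`
  have huv : u ≫ v = 𝟙 P := by
    apply hP.hom_ext
    · rw [Category.assoc, hvp₁, Category.id_comp]
      apply hsq2.hom_ext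
      · rw [Category.assoc, hv'η, ← Category.assoc, hut, ← nat p₁]
        rfl
      · rw [Category.assoc, hv's, ← Category.assoc, huf, hP.w]
    · rw [Category.assoc, hvp₂, huf, Category.id_comp]
  -- transposes: `I u = inv θ` and `I v = θ`
  have symm_unit : (Γ.adj.homEquiv P (Γ.I.obj P)).symm (Γ.adj.unit.app P) = 𝟙 _ := by
    rw [Adjunction.homEquiv_counit]
    simp
  have h1 : Γ.I.map u ≫ θ = 𝟙 (Γ.I.obj P) := by
    rw [hθdef, ← Adjunction.homEquiv_naturality_left_symm, hut, symm_unit]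
  have h2 : Γ.I.map u ≫ Γ.I.map v = 𝟙 (Γ.I.obj P) := by
    rw [← Γ.I.map_comp, huv, Γ.I.map_id]
  have hIu : Γ.I.map u = inv θ := by
    rw [← Category.comp_id (Γ.I.map u), ← IsIso.hom_inv_id θ, ← Category.assoc, h1,
      Category.id_comp]
  have hvθ : Γ.I.map v = θ := by
    rw [hIu] at h2
    rw [← Category.id_comp (Γ.I.map v), ← IsIso.hom_inv_id θ, Category.assoc, h2,
      Category.comp_id]
  -- `v ≫ u = 𝟙`
  have hvu : v ≫ u = 𝟙 Pt := by
    apply hPt.hom_ext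
    · rw [Category.assoc, hut, Category.id_comp, nat v, hvθ, ht']
    · rw [Category.assoc, huf, hvp₂, Category.id_comp]
  haveI : IsIso u := ⟨v, huv, hvu⟩
  refine ⟨hEp₂, ?_⟩
  exact hPt.of_iso (asIso u).symm (Iso.refl _) (Iso.refl _) (Iso.refl _)
    (by simp [hut, GaloisStructure.unitApp]) (by simp [huf])
    (by simp) (by simp)

/-- If `Γ` is admissible and every morphism of `E` is a monadic
extension, then coverings are pullback-stable. -/
theorem statement_2 {C : Type u} [Category.{v} C] {X : Type u'} [Category.{v'} X]
    (Γ : GaloisStructure C X) (hadm : Γ.Admissible) (hM : Γ.CondM)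
    {D A B C' : C} (t : D ⟶ A) (h : D ⟶ C') (f : A ⟶ B) (g : C' ⟶ B)
    (sq : IsPullback t h f g) (hf : Γ.Covering f) :
    Γ.Covering h := by
  obtain ⟨hEf, E', p, hp, hsplit⟩ := hf
  refine ⟨(Γ.hE2 f hEf g trivial).2 t h trivial sq, ?_⟩
  -- pull back the monadic extension `p` along `g`
  obtain ⟨F', r₁, q, -, hFq, hEq⟩ := (Γ.hE2 p hp.1 g trivial).1
  refine ⟨F', q, hM q hEq, ?_⟩
  intro P p₁ p₂ hPsq
  -- a pullback of `f` along `p`, which is a trivial covering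
  obtain ⟨Q, s₁, s₂, -, hQ, -⟩ := (Γ.hE2 f hEf p trivial).1
  have htriv : Γ.TrivCov s₂ := hsplit s₁ s₂ hQ
  -- `P` is the pullback of `s₂` along `r₁`
  have key : (p₁ ≫ t) ≫ f = (p₂ ≫ r₁) ≫ p := by
    rw [Category.assoc, sq.w, ← Category.assoc, hPsq.w, Category.assoc, Category.assoc,
      hFq.w]
  have big : IsPullback (p₁ ≫ t) p₂ f (q ≫ g) := hPsq.paste_horiz sq
  have big' : IsPullback (hQ.lift (p₁ ≫ t) (p₂ ≫ r₁) key ≫ s₁) p₂ f (r₁ ≫ p) := by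
    rw [hQ.lift_fst, hFq.w]; exact big
  have hm : IsPullback (hQ.lift (p₁ ≫ t) (p₂ ≫ r₁) key) p₂ s₂ r₁ :=
    IsPullback.of_right big' (hQ.lift_snd _ _ _) hQ
  exact trivCov_pullback Γ hadm htriv hm

end GaloisPaper
end

section
/- Let Γ be an admissible Galois structure such that every morphism in E is a monadic extension and every covering is a normal extension. Suppose p : E → B lies in E, f : A → B is a covering of B, and h : E → A is a morphism with f ∘ h = p. Then (A, f) is split by (E, p); consequently, any reflection of (E, p) into the category Spl(E, p) of extensions split by (E, p) is also a reflection of (E, p) into the category Cov(B) of coverings of B. -/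
open CategoryTheory CategoryTheory.Limits

universe v u v' u'

namespace GaloisPaper

variable {C : Type u} [Category.{v} C]

section Aux

variable {C : Type u} [Category.{v} C]

/-- Exchange the right leg of a pullback square along an isomorphism. -/
lemma isPullback_postcomp_iso {P Y Z Xc X' : C} {fst : P ⟶ Xc} {snd : P ⟶ Y}
    {f : Xc ⟶ Z} {g : Y ⟶ Z} (hpb : IsPullback fst snd f g)
    (e : Xc ⟶ X') (f' : X' ⟶ Z) [IsIso e] (he : e ≫ f' = f) :
    IsPullback (fst ≫ e) snd f' g := by
  have sq : IsPullback e f f' (𝟙 Z) :=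
    IsPullback.of_horiz_isIso ⟨by simp [he]⟩
  simpa using hpb.paste_horiz sq

variable {X : Type u'} [Category.{v'} X]

lemma unitApp_comp_homEquiv_symm (Γ : GaloisStructure C X) {A : C} {x : X}
    (t : A ⟶ Γ.H.obj x) :
    Γ.unitApp A ≫ Γ.H.map ((Γ.adj.homEquiv A x).symm t) = t := by
  have := (Γ.adj.homEquiv A x).apply_symm_apply t
  rwa [Adjunction.homEquiv_unit] at this

lemma unit_naturality (Γ : GaloisStructure C X) {A B : C} (h : A ⟶ B) :
    h ≫ Γ.unitApp B = Γ.unitApp A ≫ Γ.H.map (Γ.I.map h) := by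
  simp [GaloisStructure.unitApp]

/-- The unit at a pullback of a cospan of morphisms in the image of `H` is an
isomorphism (reflective subcategories are closed under limits). -/
lemma unit_iso_of_pullback_H (Γ : GaloisStructure C X) {M : C} {x₁ x₂ z : X}
    (φ₁ : x₁ ⟶ z) (φ₂ : x₂ ⟶ z) {m₁ : M ⟶ Γ.H.obj x₁} {m₂ : M ⟶ Γ.H.obj x₂}
    (hpb : IsPullback m₁ m₂ (Γ.H.map φ₁) (Γ.H.map φ₂)) :
    IsIso (Γ.unitApp M) := by
  haveI := Γ.hFull
  haveI := Γ.hFaithful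
  set ψ₁ := (Γ.adj.homEquiv M x₁).symm m₁ with hψ₁def
  set ψ₂ := (Γ.adj.homEquiv M x₂).symm m₂ with hψ₂def
  have hm₁ : Γ.unitApp M ≫ Γ.H.map ψ₁ = m₁ := unitApp_comp_homEquiv_symm Γ m₁
  have hm₂ : Γ.unitApp M ≫ Γ.H.map ψ₂ = m₂ := unitApp_comp_homEquiv_symm Γ m₂
  have hcomm : ψ₁ ≫ φ₁ = ψ₂ ≫ φ₂ := by
    apply (Γ.adj.homEquiv M z).injective
    rw [Adjunction.homEquiv_unit, Adjunction.homEquiv_unit]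
    show Γ.unitApp M ≫ Γ.H.map (ψ₁ ≫ φ₁) = Γ.unitApp M ≫ Γ.H.map (ψ₂ ≫ φ₂)
    rw [Γ.H.map_comp, Γ.H.map_comp, ← Category.assoc, ← Category.assoc, hm₁, hm₂]
    exact hpb.w
  have hw : Γ.H.map ψ₁ ≫ Γ.H.map φ₁ = Γ.H.map ψ₂ ≫ Γ.H.map φ₂ := by
    rw [← Γ.H.map_comp, ← Γ.H.map_comp, hcomm]
  set w := hpb.lift (Γ.H.map ψ₁) (Γ.H.map ψ₂) hw with hwdef
  have h1 : Γ.unitApp M ≫ w = 𝟙 M := by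
    apply hpb.hom_ext
    · rw [Category.assoc, hpb.lift_fst, hm₁, Category.id_comp]
    · rw [Category.assoc, hpb.lift_snd, hm₂, Category.id_comp]
  have h2 : w ≫ Γ.unitApp M = 𝟙 _ := by
    obtain ⟨k, hk⟩ := Γ.H.map_surjective (w ≫ Γ.unitApp M)
    have hk1 : k = 𝟙 _ := by
      apply (Γ.adj.homEquiv M (Γ.I.obj M)).injective
      rw [Adjunction.homEquiv_unit, Adjunction.homEquiv_unit]
      show Γ.unitApp M ≫ Γ.H.map k = Γ.unitApp M ≫ Γ.H.map (𝟙 _)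
      rw [hk, Γ.H.map_id, Category.comp_id, ← Category.assoc, h1, Category.id_comp]
    rw [← hk, hk1, Γ.H.map_id]
  exact ⟨w, h1, h2⟩

/-- Core lemma: if `f'` is a covering of `B` (hence a normal extension), and
`h ≫ f' = p`, then `f'` is split by `p`. -/
lemma covering_isSplitBy (Γ : GaloisStructure C X) (hadm : Γ.Admissible)
    (hN : ∀ ⦃A B : C⦄ (f : A ⟶ B), Γ.Covering f → Γ.NormalExt f)
    {E' A' B : C} (p : E' ⟶ B) (f' : A' ⟶ B) (hf : Γ.Covering f')
    (h : E' ⟶ A') (hcomm : h ≫ f' = p) : Γ.IsSplitBy f' p := by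
  intro P p₁ p₂ hP
  have hEf : Γ.E f' := hf.1
  have hsplit : Γ.IsSplitBy f' f' := (hN f' hf).2
  obtain ⟨⟨Q, q₁, q₂, -, hQ, hEq₂⟩, -⟩ := Γ.hE2 f' hEf f' trivial
  have htriv : Γ.TrivCov q₂ := hsplit q₁ q₂ hQ
  have hEp₂ : Γ.E p₂ := (Γ.hE2 f' hEf p trivial).2 p₁ p₂ trivial hP
  have hbig : IsPullback p₁ p₂ f' (h ≫ f') := by rwa [hcomm]
  have hl := IsPullback.of_right' hbig hQ
  set l := hQ.lift p₁ (p₂ ≫ h) (by rw [hbig.w, Category.assoc]) with hldef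
  have h2 : IsPullback (l ≫ Γ.unitApp Q) p₂ (Γ.H.map (Γ.I.map q₂))
      (h ≫ Γ.unitApp A') := hl.paste_horiz htriv.2
  rw [unit_naturality Γ h] at h2
  obtain ⟨⟨M, m₁, m₂, -, hMpb, hEm₂⟩, -⟩ :=
    Γ.hE2 _ (Γ.hG q₂ htriv.1) (Γ.H.map (Γ.I.map h)) trivial
  have ht := IsPullback.of_right' h2 hMpb
  set t := hMpb.lift (l ≫ Γ.unitApp Q) (p₂ ≫ Γ.unitApp E')
      (by rw [h2.w, Category.assoc]) with htdef
  haveI : IsIso (Γ.unitApp M) :=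
    unit_iso_of_pullback_H Γ (Γ.I.map q₂) (Γ.I.map h) hMpb
  set ψ := (Γ.adj.homEquiv M (Γ.I.obj E')).symm m₂ with hψdef
  have hψ : Γ.unitApp M ≫ Γ.H.map ψ = m₂ := unitApp_comp_homEquiv_symm Γ m₂
  have hEψ : Γ.E (Γ.H.map ψ) := by
    have hinv : inv (Γ.unitApp M) ≫ m₂ = Γ.H.map ψ := by
      rw [← hψ, IsIso.inv_hom_id_assoc]
    rw [← hinv]
    exact Γ.hE3 _ _ (Γ.hE1 _ trivial trivial inferInstance) hEm₂
  have ht' : IsPullback (t ≫ Γ.unitApp M) p₂ (Γ.H.map ψ) (Γ.unitApp E') :=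
    isPullback_postcomp_iso ht (Γ.unitApp M) (Γ.H.map ψ) hψ
  have hiso : IsIso ((Γ.adj.homEquiv P (Γ.I.obj M)).symm (t ≫ Γ.unitApp M)) :=
    hadm ψ hEψ (t ≫ Γ.unitApp M) p₂ ht'
  set ψ₂ := (Γ.adj.homEquiv P (Γ.I.obj M)).symm (t ≫ Γ.unitApp M) with hψ₂def
  have hψ₂ : Γ.unitApp P ≫ Γ.H.map ψ₂ = t ≫ Γ.unitApp M :=
    unitApp_comp_homEquiv_symm Γ _
  have hIp₂ : Γ.I.map p₂ = ψ₂ ≫ ψ := by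
    apply (Γ.adj.homEquiv P (Γ.I.obj E')).injective
    rw [Adjunction.homEquiv_unit, Adjunction.homEquiv_unit]
    show Γ.unitApp P ≫ Γ.H.map (Γ.I.map p₂) = Γ.unitApp P ≫ Γ.H.map (ψ₂ ≫ ψ)
    rw [← unit_naturality Γ p₂, Γ.H.map_comp, ← Category.assoc, hψ₂,
      Category.assoc, hψ, ht.w]
  refine ⟨hEp₂, ?_⟩
  haveI : IsIso (Γ.H.map ψ₂) := inferInstance
  rw [← hψ₂] at ht'
  have hfinal : IsPullback ((Γ.unitApp P ≫ Γ.H.map ψ₂) ≫ inv (Γ.H.map ψ₂)) p₂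
      (Γ.H.map ψ₂ ≫ Γ.H.map ψ) (Γ.unitApp E') :=
    isPullback_postcomp_iso ht' (inv (Γ.H.map ψ₂)) (Γ.H.map ψ₂ ≫ Γ.H.map ψ)
      (by rw [IsIso.inv_hom_id_assoc])
  rw [Category.assoc, IsIso.hom_inv_id, Category.comp_id,
    ← Γ.H.map_comp, ← hIp₂] at hfinal
  exact hfinal

end Aux

/-- Let `Γ` be admissible, with every morphism of `E` a monadic
extension and every covering a normal extension.  If `p : E' ⟶ B` lies in `E`,
`f : A ⟶ B` is a covering and `h : E' ⟶ A` satisfies `f ∘ h = p`, then `(A, f)` is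
split by `(E', p)`; consequently any reflection of `(E', p)` into `Spl(E', p)` is
also a reflection of `(E', p)` into `Cov(B)`. -/
theorem statement_3 {C : Type u} [Category.{v} C] {X : Type u'} [Category.{v'} X]
    (Γ : GaloisStructure C X) (hadm : Γ.Admissible) (hM : Γ.CondM)
    (hN : ∀ ⦃A B : C⦄ (f : A ⟶ B), Γ.Covering f → Γ.NormalExt f)
    {E' A B : C} (p : E' ⟶ B) (hp : Γ.E p) (f : A ⟶ B) (hf : Γ.Covering f)
    (h : E' ⟶ A) (hcomm : h ≫ f = p) :
    Γ.IsSplitBy f p ∧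
      ∀ (r : Over B) (u : Over.mk p ⟶ r),
        IsReflectionInto (fun a : Over B => Γ.E a.hom ∧ Γ.IsSplitBy a.hom p) u →
        IsReflectionInto (fun a : Over B => Γ.Covering a.hom) u := by
  haveI := Γ.hFull
  have core := covering_isSplitBy Γ hadm hN p f hf h hcomm
  refine ⟨core, ?_⟩
  intro r u ⟨⟨hEr, hSr⟩, hrefl⟩
  constructor
  · exact ⟨hEr, E', p, hM p hp, hSr⟩
  · intro a ha k
    exact hrefl ⟨ha.1, covering_isSplitBy Γ hadm hN p a.hom ha k.left
      (by simp)⟩ k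


end GaloisPaper
end

section
/- Let Γ = (C, X, H, I, η, E) be a Galois structure such that the reflector I preserves all pullbacks of a morphism g in E along a morphism f in E with g a split epimorphism. Then every covering which is a split epimorphism is a trivial covering. -/
open CategoryTheory CategoryTheory.Limits

universe v u v' u'

namespace GaloisPaper

variable {C : Type u} [Category.{v} C]

/-- If the reflector `I` preserves pullbacks of morphisms of `E` along
split epimorphisms of `E`, then every covering which is a split epimorphism is a
trivial covering. -/
theorem statement_4 {C : Type u} [Category.{v} C] {X : Type u'} [Category.{v'} X]
    (Γ : GaloisStructure C X) (hpres : Γ.PreservesSplitPullbacks)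
    {A B : C} (f : A ⟶ B) (hf : Γ.Covering f) (hsplit : IsSplitEpi f) :
    Γ.TrivCov f := by
  obtain ⟨hEf, E₀, p, hmon, hsplitBy⟩ := hf
  obtain ⟨hEp, hcomp, G, adjn, ⟨hmonadic⟩⟩ := hmon
  -- pullback P of f along p
  obtain ⟨⟨P, p₁, p₂, -, S1, hEp₂⟩, -⟩ := Γ.hE2 f hEf p trivial
  obtain ⟨-, S2⟩ := hsplitBy p₁ p₂ S1
  -- pullback Q of HIf along η_B
  obtain ⟨⟨Q, q₁, q₂, -, hQ, hEq₂⟩, -⟩ :=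
    Γ.hE2 (Γ.H.map (Γ.I.map f)) (Γ.hG f hEf) (Γ.unitApp B) trivial
  have natf : Γ.unitApp A ≫ Γ.H.map (Γ.I.map f) = f ≫ Γ.unitApp B := by
    simpa [GaloisStructure.unitApp] using (Γ.adj.unit.naturality f).symm
  have natp₁ : Γ.unitApp P ≫ Γ.H.map (Γ.I.map p₁) = p₁ ≫ Γ.unitApp A := by
    simpa [GaloisStructure.unitApp] using (Γ.adj.unit.naturality p₁).symm
  have natp : Γ.unitApp E₀ ≫ Γ.H.map (Γ.I.map p) = p ≫ Γ.unitApp B := by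
    simpa [GaloisStructure.unitApp] using (Γ.adj.unit.naturality p).symm
  haveI := Γ.adj.rightAdjoint_preservesLimits
  have hIS1 : IsPullback (Γ.I.map p₁) (Γ.I.map p₂) (Γ.I.map f) (Γ.I.map p) :=
    (hpres p₂ p₁ p f S1.flip hEp hEf hsplit).flip
  have hHIS1 : IsPullback (Γ.H.map (Γ.I.map p₁)) (Γ.H.map (Γ.I.map p₂))
      (Γ.H.map (Γ.I.map f)) (Γ.H.map (Γ.I.map p)) := hIS1.map Γ.H
  have Big : IsPullback (p₁ ≫ Γ.unitApp A) p₂ (Γ.H.map (Γ.I.map f)) (p ≫ Γ.unitApp B) := by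
    have := S2.paste_horiz hHIS1
    rwa [natp₁, natp] at this
  -- the comparison morphism
  let w : A ⟶ Q := hQ.lift (Γ.unitApp A) f natf
  have hw₁ : w ≫ q₁ = Γ.unitApp A := hQ.lift_fst _ _ _
  have hw₂ : w ≫ q₂ = f := hQ.lift_snd _ _ _
  have hu : IsPullback (p₁ ≫ w) p₂ q₂ p := by
    refine IsPullback.of_right ?_ (by rw [Category.assoc, hw₂, S1.w]) hQ
    rw [Category.assoc, hw₁]
    exact Big
  -- descent along p
  let af : EOver Γ.E B := ⟨Over.mk f, hEf⟩
  let aq : EOver Γ.E B := ⟨Over.mk q₂, hEq₂⟩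
  let wb : af ⟶ aq := ObjectProperty.homMk (Over.homMk w hw₂)
  let Sp := eMap Γ.E p hcomp
  let εq : Sp.obj (G.obj aq) ⟶ aq := adjn.counit.app aq
  let c : (G.obj aq).obj.left ⟶ Q := εq.hom.left
  have hc : c ≫ q₂ = (G.obj aq).obj.hom ≫ p := Over.w εq.hom
  let m : (G.obj aq).obj.left ⟶ P := hu.lift c (G.obj aq).obj.hom hc
  have hm₁ : m ≫ (p₁ ≫ w) = c := hu.lift_fst _ _ _
  have hm₂ : m ≫ p₂ = (G.obj aq).obj.hom := hu.lift_snd _ _ _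
  let k : (G.obj aq).obj.left ⟶ A := m ≫ p₁
  have hk : k ≫ f = (G.obj aq).obj.hom ≫ p := by
    show (m ≫ p₁) ≫ f = _
    rw [Category.assoc, S1.w, ← Category.assoc, hm₂]
  let kb : Sp.obj (G.obj aq) ⟶ af := ObjectProperty.homMk (Over.homMk k hk)
  let t : G.obj aq ⟶ G.obj af := adjn.homEquiv _ _ kb
  have hkw : kb ≫ wb = εq := by
    apply ObjectProperty.hom_ext
    apply Over.OverMorphism.ext
    show k ≫ w = c
    rw [← hm₁, Category.assoc]
  have h2 : t ≫ G.map wb = 𝟙 (G.obj aq) := by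
    rw [← Adjunction.homEquiv_naturality_right, hkw]
    simp [εq, Adjunction.homEquiv_unit]
  have h3 : G.map wb ≫ t = 𝟙 (G.obj af) := by
    apply (adjn.homEquiv _ _).symm.injective
    rw [Adjunction.homEquiv_naturality_left_symm, Equiv.symm_apply_apply,
      Adjunction.homEquiv_symm_id]
    -- goal : Sp.map (G.map wb) ≫ kb = adjn.counit.app af
    apply ObjectProperty.hom_ext
    apply Over.OverMorphism.ext
    show (G.map wb).hom.left ≫ k = (adjn.counit.app af).hom.left
    have hnat := adjn.counit.naturality wb
    have hnat' : (G.map wb).hom.left ≫ c = (adjn.counit.app af).hom.left ≫ w := by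
      have := congrArg (fun φ => φ.hom.left) hnat
      exact this
    have hcf : (adjn.counit.app af).hom.left ≫ f = (G.obj af).obj.hom ≫ p :=
      Over.w (adjn.counit.app af).hom
    have hdg : (G.map wb).hom.left ≫ (G.obj aq).obj.hom = (G.obj af).obj.hom :=
      Over.w (G.map wb).hom
    let n : (G.obj af).obj.left ⟶ P := S1.lift ((adjn.counit.app af).hom.left)
      (G.obj af).obj.hom hcf
    have hn₁ : n ≫ p₁ = (adjn.counit.app af).hom.left := S1.lift_fst _ _ _
    have hn₂ : n ≫ p₂ = (G.obj af).obj.hom := S1.lift_snd _ _ _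
    have hdm : (G.map wb).hom.left ≫ m = n := by
      apply hu.hom_ext
      · rw [Category.assoc, hm₁, hnat', ← Category.assoc, hn₁]; rfl
      · rw [Category.assoc, hm₂, hdg, hn₂]
    show (G.map wb).hom.left ≫ m ≫ p₁ = _
    rw [← Category.assoc, hdm, hn₁]
  haveI hiso : IsIso (G.map wb) := ⟨t, h3, h2⟩
  haveI := hmonadic
  have hwbiso : IsIso wb := by
    have h4 : IsIso ((Monad.comparison (monadicAdjunction G) ⋙
        (monadicAdjunction G).toMonad.forget).map wb) := by
      rw [NatIso.isIso_map_iff (Monad.comparisonForget (monadicAdjunction G)) wb]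
      exact hiso
    exact isIso_of_reflects_iso wb
      (Monad.comparison (monadicAdjunction G) ⋙ (monadicAdjunction G).toMonad.forget)
  have hwiso : IsIso w := by
    have : IsIso ((Over.forget B).map wb.hom) := by
      haveI : IsIso wb.hom := (ObjectProperty.isIso_hom_iff wb).2 hwbiso
      infer_instance
    exact this
  refine ⟨hEf, hQ.of_iso (asIso w).symm (Iso.refl _) (Iso.refl _) (Iso.refl _)
    ?_ ?_ (by simp) (by simp)⟩
  · rw [Iso.refl_hom, Category.comp_id]
    show q₁ = inv w ≫ Γ.unitApp A
    rw [← hw₁, IsIso.inv_hom_id_assoc]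
  · rw [Iso.refl_hom, Category.comp_id]
    show q₂ = inv w ≫ f
    rw [← hw₂, IsIso.inv_hom_id_assoc]

end GaloisPaper
end

section
/- Let Γ = (C, X, H, I, η, E) be an admissible Galois structure such that every morphism in E is a monadic extension and I preserves pullbacks of split epimorphisms in E along morphisms in E. Then every covering is a normal extension. -/
open CategoryTheory CategoryTheory.Limits

universe v u v' u'

namespace GaloisPaper

variable {C : Type u} [Category.{v} C]

section Auxiliary

variable {X : Type u'} [Category.{v'} X]

namespace GaloisStructure

variable (Γ : GaloisStructure C X)

/-- Naturality of the unit of the reflection. -/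
lemma unit_nat {A B : C} (f : A ⟶ B) :
    f ≫ Γ.unitApp B = Γ.unitApp A ≫ Γ.H.map (Γ.I.map f) := by
  have h := Γ.adj.unit.naturality f
  simp only [Functor.id_map, Functor.comp_map] at h
  exact h

/-- If `g'` arises as a pullback of `H φ` along the unit, then (by admissibility)
`g'` is a trivial covering. -/
lemma trivCov_of_pb (hadm : Γ.Admissible) {C₀ : C} {x : X} (φ : x ⟶ Γ.I.obj C₀)
    (hφ : Γ.E (Γ.H.map φ)) {A' : C} {t : A' ⟶ Γ.H.obj x} {g' : A' ⟶ C₀}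
    (hpb : IsPullback t g' (Γ.H.map φ) (Γ.unitApp C₀)) (hEg' : Γ.E g') :
    Γ.TrivCov g' := by
  have hiso : IsIso ((Γ.adj.homEquiv A' x).symm t) := hadm φ hφ t g' hpb
  set ε' := (Γ.adj.homEquiv A' x).symm t with hε'
  have ht : t = Γ.unitApp A' ≫ Γ.H.map ε' := by
    have h0 := (Γ.adj.homEquiv A' x).apply_symm_apply t
    rw [Adjunction.homEquiv_unit] at h0
    exact h0.symm
  have hcomp : ε' ≫ φ = Γ.I.map g' := by
    apply (Γ.adj.homEquiv A' (Γ.I.obj C₀)).injective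
    rw [Adjunction.homEquiv_unit, Adjunction.homEquiv_unit, Γ.H.map_comp,
      ← Category.assoc]
    show (Γ.unitApp A' ≫ Γ.H.map ε') ≫ Γ.H.map φ = Γ.unitApp A' ≫ Γ.H.map (Γ.I.map g')
    rw [← ht, hpb.w, Γ.unit_nat g']
  haveI : IsIso (Γ.H.map ε') := inferInstance
  refine ⟨hEg', ?_⟩
  refine hpb.of_iso (Iso.refl _) (asIso (Γ.H.map ε')).symm (Iso.refl _) (Iso.refl _)
    ?_ (by simp) ?_ (by simp)
  · rw [ht]; simp
  · have : Γ.H.map ε' ≫ Γ.H.map φ = Γ.H.map (Γ.I.map g') := by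
      rw [← Γ.H.map_comp, hcomp]
    simp [← this]

/-- The vertex of a pullback (in `C`) of a cospan of morphisms coming from `X`
has invertible unit: the reflective subcategory is closed under pullbacks. -/
lemma isIso_unitApp_of_pb {x₁ x₂ x₃ : X} {a : x₁ ⟶ x₃} {b : x₂ ⟶ x₃} {V : C}
    {v₁ : V ⟶ Γ.H.obj x₁} {v₂ : V ⟶ Γ.H.obj x₂}
    (h : IsPullback v₁ v₂ (Γ.H.map a) (Γ.H.map b)) : IsIso (Γ.unitApp V) := by
  haveI := Γ.hFull; haveI := Γ.hFaithful
  set φ₁ := (Γ.adj.homEquiv V x₁).symm v₁ with hφ₁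
  set φ₂ := (Γ.adj.homEquiv V x₂).symm v₂ with hφ₂
  have hv₁ : v₁ = Γ.unitApp V ≫ Γ.H.map φ₁ := by
    have h0 := (Γ.adj.homEquiv V x₁).apply_symm_apply v₁
    rw [Adjunction.homEquiv_unit] at h0; exact h0.symm
  have hv₂ : v₂ = Γ.unitApp V ≫ Γ.H.map φ₂ := by
    have h0 := (Γ.adj.homEquiv V x₂).apply_symm_apply v₂
    rw [Adjunction.homEquiv_unit] at h0; exact h0.symm
  have hcone : φ₁ ≫ a = φ₂ ≫ b := by
    apply (Γ.adj.homEquiv V x₃).injective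
    rw [Adjunction.homEquiv_unit, Adjunction.homEquiv_unit, Γ.H.map_comp, Γ.H.map_comp,
      ← Category.assoc, ← Category.assoc]
    show (Γ.unitApp V ≫ Γ.H.map φ₁) ≫ Γ.H.map a = (Γ.unitApp V ≫ Γ.H.map φ₂) ≫ Γ.H.map b
    rw [← hv₁, ← hv₂, h.w]
  let k : Γ.H.obj (Γ.I.obj V) ⟶ V :=
    h.lift (Γ.H.map φ₁) (Γ.H.map φ₂)
      (by rw [← Γ.H.map_comp, ← Γ.H.map_comp, hcone])
  have hk₁ : k ≫ v₁ = Γ.H.map φ₁ := h.lift_fst _ _ _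
  have hk₂ : k ≫ v₂ = Γ.H.map φ₂ := h.lift_snd _ _ _
  have r1 : Γ.unitApp V ≫ k = 𝟙 V := by
    apply h.hom_ext
    · rw [Category.assoc, hk₁, Category.id_comp, ← hv₁]
    · rw [Category.assoc, hk₂, Category.id_comp, ← hv₂]
  haveI : IsIso (Γ.adj.counit.app (Γ.I.obj V)) := inferInstance
  have hIk : Γ.I.map k = Γ.adj.counit.app (Γ.I.obj V) := by
    have h1 : Γ.I.map (Γ.unitApp V) ≫ Γ.I.map k = 𝟙 _ := by
      rw [← Γ.I.map_comp]
      show Γ.I.map (Γ.unitApp V ≫ k) = _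
      rw [r1, Γ.I.map_id]
    have h2 : Γ.I.map (Γ.unitApp V) ≫ Γ.adj.counit.app (Γ.I.obj V) = 𝟙 _ :=
      Γ.adj.left_triangle_components V
    haveI : IsIso (Γ.I.map (Γ.unitApp V)) := by
      have h3 := IsIso.eq_inv_of_inv_hom_id h2
      rw [h3]; infer_instance
    exact (cancel_epi (Γ.I.map (Γ.unitApp V))).mp (h1.trans h2.symm)
  have r2 : k ≫ Γ.unitApp V = 𝟙 _ := by
    have hnat : k ≫ Γ.unitApp V
        = Γ.adj.unit.app (Γ.H.obj (Γ.I.obj V)) ≫ Γ.H.map (Γ.I.map k) := by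
      have h := Γ.adj.unit.naturality k
      simp only [Functor.id_map, Functor.comp_map] at h
      exact h
    rw [show Γ.unitApp V = Γ.adj.unit.app V from rfl] at hnat ⊢
    rw [hnat, hIk, Γ.adj.right_triangle_components]
  exact ⟨k, r1, r2⟩

/-- Trivial coverings are stable under pullback. -/
lemma trivCov_stable (hadm : Γ.Admissible) {A₀ B₀ C₀ A' : C} {g : A₀ ⟶ B₀}
    (hg : Γ.TrivCov g) {z : C₀ ⟶ B₀} {u : A' ⟶ A₀} {g' : A' ⟶ C₀}
    (hsq : IsPullback u g' g z) (hEg' : Γ.E g') : Γ.TrivCov g' := by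
  have hHIg : Γ.E (Γ.H.map (Γ.I.map g)) := Γ.hG g hg.1
  obtain ⟨⟨V, v₁, v₂, -, hV, hEv₂⟩, -⟩ := Γ.hE2 _ hHIg (Γ.H.map (Γ.I.map z)) trivial
  haveI hη : IsIso (Γ.unitApp V) := Γ.isIso_unitApp_of_pb hV
  have O : IsPullback (u ≫ Γ.unitApp A₀) g' (Γ.H.map (Γ.I.map g))
      (Γ.unitApp C₀ ≫ Γ.H.map (Γ.I.map z)) := by
    have h0 := hsq.paste_horiz hg.2
    rwa [Γ.unit_nat z] at h0
  have hconeV : (u ≫ Γ.unitApp A₀) ≫ Γ.H.map (Γ.I.map g)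
      = (g' ≫ Γ.unitApp C₀) ≫ Γ.H.map (Γ.I.map z) := by
    rw [O.w, Category.assoc]
  set t' := hV.lift (u ≫ Γ.unitApp A₀) (g' ≫ Γ.unitApp C₀) hconeV with ht'
  have hL : IsPullback t' g' v₂ (Γ.unitApp C₀) := by
    refine IsPullback.of_right ?_ ?_ hV
    · rw [hV.lift_fst]
      have : (Γ.unitApp C₀) ≫ Γ.H.map (Γ.I.map z)
          = Γ.unitApp C₀ ≫ Γ.H.map (Γ.I.map z) := rfl
      exact O
    · rw [hV.lift_snd]
  set φ := (Γ.adj.homEquiv V (Γ.I.obj C₀)).symm v₂ with hφdef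
  have hv₂φ : v₂ = Γ.unitApp V ≫ Γ.H.map φ := by
    have h0 := (Γ.adj.homEquiv V (Γ.I.obj C₀)).apply_symm_apply v₂
    rw [Adjunction.homEquiv_unit] at h0; exact h0.symm
  have hEφ : Γ.E (Γ.H.map φ) := by
    have heq : Γ.H.map φ = inv (Γ.unitApp V) ≫ v₂ := by
      rw [hv₂φ]; simp
    rw [heq]
    exact Γ.hE3 _ _ (Γ.hE1 _ trivial trivial inferInstance) hEv₂
  have hL' : IsPullback (t' ≫ Γ.unitApp V) g' (Γ.H.map φ) (Γ.unitApp C₀) := by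
    refine hL.of_iso (Iso.refl _) (asIso (Γ.unitApp V)) (Iso.refl _) (Iso.refl _)
      (by simp) (by simp) ?_ (by simp)
    simpa using hv₂φ
  exact Γ.trivCov_of_pb hadm φ hEφ hL' hEg'

end GaloisStructure

/-- Auxiliary: given a monadic extension `q` and a pullback square of `p₂`
along `q`, the transpose of the comparison morphism under the adjunction
`Σ_q ⊣ G` is an isomorphism. -/
lemma eOver_homEquiv_isIso {F : MorphismProperty C} {A Q₀ : C} {q : Q₀ ⟶ A}
    (hcomp : ∀ ⦃Z : C⦄ (f : Z ⟶ Q₀), F f → F (f ≫ q))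
    (G : EOver F A ⥤ EOver F Q₀) (adjG : eMap F q hcomp ⊣ G)
    {P W : C} {p₂ : P ⟶ A} (hEp : F p₂) {u₁ : W ⟶ P} {w : W ⟶ Q₀} (hEw : F w)
    (sq : IsPullback u₁ w p₂ q) :
    IsIso ((adjG.homEquiv ⟨Over.mk w, hEw⟩ ⟨Over.mk p₂, hEp⟩)
      (ObjectProperty.homMk (show (Over.mk (w ≫ q) : Over A) ⟶ Over.mk p₂ from Over.homMk u₁ sq.w))) := by
  set Wo : EOver F Q₀ := ⟨Over.mk w, hEw⟩ with hWo
  set zP : EOver F A := ⟨Over.mk p₂, hEp⟩ with hzP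
  set u1m : (eMap F q hcomp).obj Wo ⟶ zP :=
    ObjectProperty.homMk (show (Over.mk (w ≫ q) : Over A) ⟶ Over.mk p₂ from Over.homMk u₁ sq.w) with hu1m
  set α := (adjG.homEquiv Wo zP) u1m with hα
  -- the counit
  set eP : (eMap F q hcomp).obj (G.obj zP) ⟶ zP := adjG.counit.app zP with heP
  have heW : eP.hom.left ≫ p₂ = (G.obj zP).obj.hom ≫ q := by
    exact Over.w eP.hom
  set β0 := sq.lift eP.hom.left (G.obj zP).obj.hom heW
    with hβ0
  have hβ0₁ : β0 ≫ u₁ = eP.hom.left := sq.lift_fst _ _ _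
  have hβ0₂ : β0 ≫ w = (G.obj zP).obj.hom := sq.lift_snd _ _ _
  set βm : G.obj zP ⟶ Wo :=
    ObjectProperty.homMk (show (G.obj zP).obj ⟶ (Over.mk w : Over Q₀) from Over.homMk β0 hβ0₂) with hβm
  -- the key adjunction identity
  have hkey : (eMap F q hcomp).map α ≫ adjG.counit.app zP = u1m := by
    have h0 : (adjG.homEquiv Wo zP).symm α = u1m := (adjG.homEquiv _ _).symm_apply_apply u1m
    rw [Adjunction.homEquiv_counit] at h0
    exact h0
  have hkl : α.hom.left
      ≫ eP.hom.left = u₁ := by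
    have h0 := congrArg (fun m => m.hom.left) hkey
    exact h0
  have h1 : α ≫ βm = 𝟙 Wo := by
    have h1l : α.hom.left ≫ β0 = 𝟙 W := by
      apply sq.hom_ext
      · exact (Category.assoc _ _ _).trans ((congrArg (fun m => α.hom.left ≫ m) hβ0₁).trans
          (hkl.trans (Category.id_comp _).symm))
      · exact (Category.assoc _ _ _).trans ((congrArg (fun m => α.hom.left ≫ m) hβ0₂).trans
          ((Over.w α.hom).trans (Category.id_comp _).symm))
    apply InducedCategory.hom_ext
    apply Over.OverMorphism.ext
    exact h1l
  have h2 : βm ≫ α = 𝟙 (G.obj zP) := by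
    apply (adjG.homEquiv (G.obj zP) zP).symm.injective
    rw [Adjunction.homEquiv_counit, Adjunction.homEquiv_counit, (eMap F q hcomp).map_comp,
      Category.assoc, hkey, (eMap F q hcomp).map_id, Category.id_comp]
    apply InducedCategory.hom_ext
    apply Over.OverMorphism.ext
    show β0 ≫ u₁ = _
    rw [hβ0₁]
  exact ⟨βm, h1, h2⟩

/-- Descent along a monadic extension: if the comparison morphism `c` between two
objects over `A` becomes an isomorphism after pulling back along a monadic
extension `q`, then `c` is an isomorphism. -/
lemma isIso_of_monadicExt {F : MorphismProperty C} {A Q₀ : C} {q : Q₀ ⟶ A}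
    (hq : IsMonadicExt F q) {P V W : C} {p₂ : P ⟶ A} {gV : V ⟶ A}
    (hEp : F p₂) (hEg : F gV) {c : P ⟶ V} (hc : c ≫ gV = p₂)
    {u₁ : W ⟶ P} {w : W ⟶ Q₀} (hEw : F w)
    (sq1 : IsPullback u₁ w p₂ q) (sq2 : IsPullback (u₁ ≫ c) w gV q) : IsIso c := by
  obtain ⟨hqE, hcomp, G, adjG, ⟨hmon⟩⟩ := hq
  set Wo : EOver F Q₀ := ⟨Over.mk w, hEw⟩ with hWo
  set zP : EOver F A := ⟨Over.mk p₂, hEp⟩ with hzP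
  set zV : EOver F A := ⟨Over.mk gV, hEg⟩ with hzV
  set cm : zP ⟶ zV :=
    ObjectProperty.homMk (show (Over.mk p₂ : Over A) ⟶ Over.mk gV from Over.homMk c hc) with hcm
  set u1m : (eMap F q hcomp).obj Wo ⟶ zP :=
    ObjectProperty.homMk (show (Over.mk (w ≫ q) : Over A) ⟶ Over.mk p₂ from Over.homMk u₁ sq1.w) with hu1m
  set u2m : (eMap F q hcomp).obj Wo ⟶ zV :=
    ObjectProperty.homMk (show (Over.mk (w ≫ q) : Over A) ⟶ Over.mk gV from Over.homMk (u₁ ≫ c) sq2.w)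
    with hu2m
  set α := (adjG.homEquiv Wo zP) u1m with hα
  set α' := (adjG.homEquiv Wo zV) u2m with hα'
  haveI hαiso : IsIso α := eOver_homEquiv_isIso hcomp G adjG hEp hEw sq1
  haveI hα'iso : IsIso α' := eOver_homEquiv_isIso hcomp G adjG hEg hEw sq2
  have hnat : α ≫ G.map cm = α' := by
    rw [hα, ← Adjunction.homEquiv_naturality_right]
    congr 1
  have hGiso : IsIso (G.map cm) := by
    have : G.map cm = inv α ≫ α' := by rw [← hnat]; simp
    rw [this]; infer_instance
  -- monadic functors reflect isomorphisms
  haveI := hmon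
  haveI := MonadicRightAdjoint.eqv (R := G)
  set adj2 := MonadicRightAdjoint.adj (R := G) with hadj2
  have hiso2 : IsIso ((Monad.comparison adj2 ⋙ adj2.toMonad.forget).map cm) := by
    rw [NatIso.isIso_map_iff (Monad.comparisonForget adj2) cm]
    exact hGiso
  haveI : IsIso (adj2.toMonad.forget.map ((Monad.comparison adj2).map cm)) := hiso2
  haveI : IsIso ((Monad.comparison adj2).map cm) :=
    isIso_of_reflects_iso _ adj2.toMonad.forget
  haveI : IsIso cm := isIso_of_reflects_iso _ (Monad.comparison adj2)
  have : IsIso ((ObjectProperty.ι _ ⋙ Over.forget A).map cm) := Functor.map_isIso _ cm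
  exact this

end Auxiliary

/-- If `Γ` is admissible, every morphism of `E` is a monadic
extension, and `I` preserves pullbacks of split epimorphisms in `E` along
morphisms of `E`, then every covering is a normal extension. -/
theorem statement_5 {C : Type u} [Category.{v} C] {X : Type u'} [Category.{v'} X]
    (Γ : GaloisStructure C X) (hadm : Γ.Admissible) (hM : Γ.CondM)
    (hpres : Γ.PreservesSplitPullbacks)
    {A B : C} (f : A ⟶ B) (hf : Γ.Covering f) :
    Γ.NormalExt f := by
  obtain ⟨hEf, E', p, hmonp, hsplit⟩ := hf
  have hEp : Γ.E p := hmonp.1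
  refine ⟨hM f hEf, ?_⟩
  intro P p₁ p₂ hPB
  have hEp₂ : Γ.E p₂ := (Γ.hE2 f hEf f trivial).2 p₁ p₂ trivial hPB
  have hEp₁ : Γ.E p₁ := (Γ.hE2 f hEf f trivial).2 p₂ p₁ trivial hPB.flip
  obtain ⟨⟨Q, q₁, q₂, -, hQ, hEq₂⟩, -⟩ := Γ.hE2 f hEf p trivial
  have htrivq₂ : Γ.TrivCov q₂ := hsplit q₁ q₂ hQ
  have hEq₁ : Γ.E q₁ := (Γ.hE2 p hEp f trivial).2 q₂ q₁ trivial hQ.flip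
  obtain ⟨⟨W, w₁, w₂, -, hW, hEw₂⟩, -⟩ := Γ.hE2 p₂ hEp₂ q₁ trivial
  -- the induced map `u : W ⟶ Q` exhibiting `w₂` as kernel-pair pullback of `q₂`
  have hcone : (w₁ ≫ p₁) ≫ f = (w₂ ≫ q₂) ≫ p := by
    rw [Category.assoc, hPB.w, ← Category.assoc, hW.w, Category.assoc, hQ.w,
      Category.assoc]
  set u := hQ.lift (w₁ ≫ p₁) (w₂ ≫ q₂) hcone with hu
  have hu₁ : u ≫ q₁ = w₁ ≫ p₁ := hQ.lift_fst _ _ _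
  have hu₂ : u ≫ q₂ = w₂ ≫ q₂ := hQ.lift_snd _ _ _
  have hbig : IsPullback (w₁ ≫ p₁) w₂ f (q₁ ≫ f) := hW.paste_horiz hPB
  have hbig' : IsPullback (u ≫ q₁) w₂ f (q₂ ≫ p) := by
    rw [hu₁, ← hQ.w]; exact hbig
  have hX : IsPullback u w₂ q₂ q₂ := IsPullback.of_right hbig' hu₂ hQ
  have htrivw₂ : Γ.TrivCov w₂ := Γ.trivCov_stable hadm htrivq₂ hX hEw₂
  -- `I` preserves the pullback of `q₁` along the split epimorphism `p₂`
  have hsplitp₂ : IsSplitEpi p₂ :=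
    ⟨⟨⟨hPB.lift (𝟙 A) (𝟙 A) rfl, hPB.lift_snd _ _ _⟩⟩⟩
  have hXpb : IsPullback (Γ.I.map w₂) (Γ.I.map w₁) (Γ.I.map q₁) (Γ.I.map p₂) :=
    hpres w₂ w₁ q₁ p₂ hW.flip hEq₁ hEp₂ hsplitp₂
  haveI : PreservesLimitsOfSize.{0, 0} Γ.H := Γ.adj.rightAdjoint_preservesLimits
  have hHpb : IsPullback (Γ.H.map (Γ.I.map w₁)) (Γ.H.map (Γ.I.map w₂))
      (Γ.H.map (Γ.I.map p₂)) (Γ.H.map (Γ.I.map q₁)) := IsPullback.map Γ.H hXpb.flip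
  have O : IsPullback (w₁ ≫ Γ.unitApp P) w₂ (Γ.H.map (Γ.I.map p₂))
      (q₁ ≫ Γ.unitApp A) := by
    have h0 := htrivw₂.2.paste_horiz hHpb
    rwa [← Γ.unit_nat w₁, ← Γ.unit_nat q₁] at h0
  -- the canonical trivial covering attached to `p₂`, and the comparison map
  have hEHIp₂ : Γ.E (Γ.H.map (Γ.I.map p₂)) := Γ.hG p₂ hEp₂
  obtain ⟨⟨V, tt, gt, -, hV, hEgt⟩, -⟩ := Γ.hE2 _ hEHIp₂ (Γ.unitApp A) trivial
  have hcomm : Γ.unitApp P ≫ Γ.H.map (Γ.I.map p₂) = p₂ ≫ Γ.unitApp A :=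
    (Γ.unit_nat p₂).symm
  set c := hV.lift (Γ.unitApp P) p₂ hcomm with hcdef
  have hc₁ : c ≫ tt = Γ.unitApp P := hV.lift_fst _ _ _
  have hc₂ : c ≫ gt = p₂ := hV.lift_snd _ _ _
  have O' : IsPullback ((w₁ ≫ c) ≫ tt) w₂ (Γ.H.map (Γ.I.map p₂))
      (q₁ ≫ Γ.unitApp A) := by
    rw [Category.assoc, hc₁]; exact O
  have sq2 : IsPullback (w₁ ≫ c) w₂ gt q₁ :=
    IsPullback.of_right O' (by rw [Category.assoc, hc₂]; exact hW.w) hV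
  have hciso : IsIso c := isIso_of_monadicExt (hM q₁ hEq₁) hEp₂ hEgt hc₂ hEw₂ hW sq2
  refine ⟨hEp₂, ?_⟩
  refine hV.of_iso (asIso c).symm (Iso.refl _) (Iso.refl _) (Iso.refl _)
    ?_ ?_ (by simp) (by simp)
  · simp [← hc₁]
  · simp [← hc₂]

end GaloisPaper
end

section
/- Let C be a category with finite limits, and let E be a class of morphisms containing all isomorphisms, pullback-stable, closed under composition, and satisfying: if g ∘ f ∈ E then g ∈ E. Define E¹ to be the class of commutative squares (f', f) : a → b between morphisms a, b ∈ E such that f, f' ∈ E and the comparison morphism from the top-left object to the pullback of b along f lies in E. Then a commutative square of morphisms of E lies in E¹ if and only if, viewed as a morphism in the category Ext(C) of E-morphisms, all of its pullbacks along arbitrary morphisms of Ext(C) exist and are computed pointwise (i.e., preserved by the inclusion Ext(C) → Arr(C)), its pullbacks lie in the analogous class, and its horizontal arrows f, f' lie in E. -/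
open CategoryTheory CategoryTheory.Limits

universe v u v' u'

namespace GaloisPaper

variable {C : Type u} [Category.{v} C]

/-- Componentwise pullbacks give a pullback in the arrow category. -/
lemma arrow_isPullback {C : Type u} [Category.{v} C]
    {a b c d : Arrow C} (σ : a ⟶ b) (g : c ⟶ b) (q₁ : d ⟶ a) (q₂ : d ⟶ c)
    (w : q₁ ≫ σ = q₂ ≫ g)
    (hl : IsPullback q₁.left q₂.left σ.left g.left)
    (hr : IsPullback q₁.right q₂.right σ.right g.right) :
    IsPullback q₁ q₂ σ g := by
  refine IsPullback.of_isLimit' ⟨w⟩ (PullbackCone.IsLimit.mk _ ?_ ?_ ?_ ?_)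
  · intro s
    have hcl : s.fst.left ≫ σ.left = s.snd.left ≫ g.left := by
      have := s.condition
      rw [← Arrow.comp_left, this, Arrow.comp_left]
    have hcr : s.fst.right ≫ σ.right = s.snd.right ≫ g.right := by
      have := s.condition
      rw [← Arrow.comp_right, this, Arrow.comp_right]
    refine Arrow.homMk (u := hl.lift s.fst.left s.snd.left hcl)
      (v := hr.lift s.fst.right s.snd.right hcr) ?_
    apply hr.hom_ext
    · rw [Category.assoc, Category.assoc, ← Arrow.w q₁, IsPullback.lift_fst_assoc,
        Arrow.w s.fst, IsPullback.lift_fst]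
    · rw [Category.assoc, Category.assoc, ← Arrow.w q₂, IsPullback.lift_snd_assoc,
        Arrow.w s.snd, IsPullback.lift_snd]
  · intro s
    ext
    · exact hl.lift_fst _ _ _
    · exact hr.lift_fst _ _ _
  · intro s
    ext
    · exact hl.lift_snd _ _ _
    · exact hr.lift_snd _ _ _
  · intro s m hm₁ hm₂
    simp only [Arrow.homMk]
    ext
    · apply hl.hom_ext
      · rw [hl.lift_fst, ← Arrow.comp_left, hm₁]
      · rw [hl.lift_snd, ← Arrow.comp_left, hm₂]
    · apply hr.hom_ext
      · rw [hr.lift_fst, ← Arrow.comp_right, hm₁]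
      · rw [hr.lift_snd, ← Arrow.comp_right, hm₂]

/-- In a finitely complete category with a class `E` satisfying
(E1)-(E4), a commutative square of `E`-morphisms (a morphism `σ : a ⟶ b` of
`Ext(C)`) lies in `E¹` (i.e. its comparison to the pullback lies in `E`) if and
only if its horizontal arrows lie in `E` and its pullbacks along arbitrary
morphisms of `Ext(C)` exist and are computed pointwise (i.e. there is a pullback
object lying in `Ext(C)` whose underlying square is a pullback in `Arr(C)`). -/
theorem statement_6 {C : Type u} [Category.{v} C] [HasFiniteLimits C]
    (E : MorphismProperty C)
    (hE1 : CondE1 (fun _ => True) E) (hE2 : CondE2 (fun _ => True) E)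
    (hE3 : CondE3 E) (hE4 : CondE4 (fun _ => True) E)
    {a b : Arrow C} (ha : E a.hom) (hb : E b.hom) (σ : a ⟶ b) :
    InE1 E σ ↔
      (E σ.left ∧ E σ.right ∧
        ∀ ⦃c : Arrow C⦄ (g : c ⟶ b), E c.hom →
          ∃ (d : Arrow C) (q₁ : d ⟶ a) (q₂ : d ⟶ c),
            E d.hom ∧ IsPullback q₁ q₂ σ g) := by
  constructor
  · rintro ⟨-, -, hfl, hfr, P, p₁, p₂, l, hP, hl1, hl2, hEl⟩
    refine ⟨hfl, hfr, ?_⟩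
    intro c g hc
    have hD' := IsPullback.of_hasPullback σ.left g.left
    have hD := IsPullback.of_hasPullback σ.right g.right
    have hQ := IsPullback.of_hasPullback p₂ g.left
    let dhom : pullback σ.left g.left ⟶ pullback σ.right g.right :=
      pullback.lift (pullback.fst _ _ ≫ a.hom) (pullback.snd _ _ ≫ c.hom) (by
        rw [Category.assoc, ← Arrow.w σ, Category.assoc, ← Arrow.w g,
          ← Category.assoc, pullback.condition, Category.assoc])
    let k : pullback σ.left g.left ⟶ pullback p₂ g.left :=
      pullback.lift (pullback.fst _ _ ≫ l) (pullback.snd _ _)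
        (by rw [Category.assoc, hl2]; exact pullback.condition)
    let m : pullback p₂ g.left ⟶ pullback σ.right g.right :=
      pullback.lift (pullback.fst _ _ ≫ p₁) (pullback.snd _ _ ≫ c.hom)
        (by rw [Category.assoc, hP.w, ← Category.assoc, pullback.condition,
          Category.assoc, Arrow.w g, Category.assoc])
    have hcomp1 : IsPullback (pullback.fst σ.left g.left)
        (k ≫ pullback.snd p₂ g.left) (l ≫ p₂) g.left := by
      rw [hl2]; simpa [pullback.lift_fst, pullback.lift_snd, pullback.lift_fst_assoc, pullback.lift_snd_assoc, k] using hD'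
    have claim1 : IsPullback (pullback.fst σ.left g.left) k l (pullback.fst p₂ g.left) :=
      IsPullback.of_bot hcomp1 (by simp [pullback.lift_fst, pullback.lift_snd, pullback.lift_fst_assoc, pullback.lift_snd_assoc, k]) hQ
    have hEk : E k := (hE2 l hEl (pullback.fst p₂ g.left) trivial).2 _ k trivial claim1
    have hbig : IsPullback (pullback.snd p₂ g.left) (pullback.fst p₂ g.left ≫ p₁)
        (g.left ≫ b.hom) σ.right := hQ.flip.paste_vert hP.flip
    have hcomp2 : IsPullback (pullback.snd p₂ g.left)
        (m ≫ pullback.fst σ.right g.right) (c.hom ≫ g.right) σ.right := by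
      rw [← Arrow.w g]; simpa [pullback.lift_fst, pullback.lift_snd, pullback.lift_fst_assoc, pullback.lift_snd_assoc, m] using hbig
    have claim2 : IsPullback (pullback.snd p₂ g.left) m c.hom (pullback.snd σ.right g.right) :=
      IsPullback.of_bot hcomp2 (by simp [pullback.lift_fst, pullback.lift_snd, pullback.lift_fst_assoc, pullback.lift_snd_assoc, m]) hD.flip
    have hEm : E m := (hE2 c.hom hc (pullback.snd σ.right g.right) trivial).2 _ m trivial claim2
    have hdkm : dhom = k ≫ m := by
      apply pullback.hom_ext <;> simp [pullback.lift_fst, pullback.lift_snd, pullback.lift_fst_assoc, pullback.lift_snd_assoc, dhom, k, m, hl1, hl2]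
    refine ⟨Arrow.mk dhom,
      Arrow.homMk (u := pullback.fst σ.left g.left) (v := pullback.fst σ.right g.right)
        (by simp [pullback.lift_fst, pullback.lift_snd, pullback.lift_fst_assoc, pullback.lift_snd_assoc, dhom]),
      Arrow.homMk (u := pullback.snd σ.left g.left) (v := pullback.snd σ.right g.right)
        (by simp [pullback.lift_fst, pullback.lift_snd, pullback.lift_fst_assoc, pullback.lift_snd_assoc, dhom]),
      ?_, ?_⟩
    · show E dhom
      rw [hdkm]; exact hE3 _ _ hEk hEm
    · refine arrow_isPullback σ g _ _ ?_ hD' hD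
      ext
      · simpa using pullback.condition
      · simpa using pullback.condition
  · rintro ⟨hfl, hfr, hpb⟩
    let c : Arrow C := Arrow.mk (𝟙 b.left)
    let g : c ⟶ b := Arrow.homMk (u := 𝟙 b.left) (v := b.hom) (by simp [c])
    have hc : E c.hom := hE1 _ trivial trivial (show IsIso (𝟙 b.left) by infer_instance)
    obtain ⟨d, q₁, q₂, hd, hpb'⟩ := hpb g hc
    have hP : IsPullback (pullback.fst σ.right b.hom) (pullback.snd σ.right b.hom)
        σ.right b.hom := IsPullback.of_hasPullback _ _
    let l0 : a.left ⟶ pullback σ.right b.hom :=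
      pullback.lift a.hom σ.left (Arrow.w σ).symm
    let q₁₀ : Arrow.mk l0 ⟶ a :=
      Arrow.homMk (u := 𝟙 a.left) (v := pullback.fst σ.right b.hom) (by simp [pullback.lift_fst, pullback.lift_snd, pullback.lift_fst_assoc, pullback.lift_snd_assoc, l0])
    let q₂₀ : Arrow.mk l0 ⟶ c :=
      Arrow.homMk (u := σ.left) (v := pullback.snd σ.right b.hom) (by simp [pullback.lift_fst, pullback.lift_snd, pullback.lift_fst_assoc, pullback.lift_snd_assoc, l0, c])
    have hpb₀ : IsPullback q₁₀ q₂₀ σ g := by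
      refine arrow_isPullback σ g _ _ ?_ ?_ ?_
      · ext
        · rw [Arrow.comp_left, Arrow.comp_left]; simp [q₁₀, q₂₀, g, c]
        · simpa [q₁₀, q₂₀, g] using pullback.condition
      · show IsPullback (𝟙 a.left) σ.left σ.left (𝟙 b.left)
        exact IsPullback.of_horiz_isIso ⟨by simp⟩
      · exact hP
    let i : Arrow.mk l0 ≅ d := hpb₀.isoIsPullback _ _ hpb'
    have hli : l0 = i.hom.left ≫ d.hom ≫ CategoryTheory.inv i.hom.right := by
      rw [← Category.assoc, Arrow.w i.hom]
      simp [Arrow.mk_hom]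
    have hEl0 : E l0 := by
      rw [hli]
      exact hE3 _ _ (hE1 _ trivial trivial inferInstance)
        (hE3 _ _ hd (hE1 _ trivial trivial inferInstance))
    refine ⟨ha, hb, hfl, hfr, pullback σ.right b.hom, pullback.fst _ _, pullback.snd _ _,
      l0, hP, by simp [pullback.lift_fst, pullback.lift_snd, pullback.lift_fst_assoc, pullback.lift_snd_assoc, l0], by simp [pullback.lift_fst, pullback.lift_snd, pullback.lift_fst_assoc, pullback.lift_snd_assoc, l0], hEl0⟩

end GaloisPaper
end

section
/- Let C be a regular Mal'tsev category and E its regular epimorphisms. Then every split epimorphism in Ext(C) is a double extension: given a commutative square of regular epimorphisms a : A' → A, b : B' → B, f' : A' → B', f : A → B admitting sections s' of f' and s of f compatible with a and b (a ∘ s' = s ∘ b), the comparison morphism A' → A ×_B B' is a regular epimorphism. -/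
open CategoryTheory CategoryTheory.Limits

universe v u v' u'

namespace GaloisPaper

variable {C : Type u} [Category.{v} C]

section Aux

variable {C : Type u} [Category.{v} C]

/-- A regular epi composed with an iso is a regular epi. -/
noncomputable def regEpiCompIso {X Y Z : C} (e : X ⟶ Y) (m : Y ⟶ Z) (he : RegularEpi e)
    [IsIso m] : RegularEpi (e ≫ m) where
  W := he.W
  left := he.left
  right := he.right
  w := by rw [← Category.assoc, he.w, Category.assoc]
  isColimit := IsColimit.ofIsoColimit he.isColimit (Cofork.ext (asIso m) rfl)

/-- In a regular category, every strong epi is a regular epi. -/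
lemma regEpi_of_strongEpi (hreg : IsRegularCategory C) {X Y : C} (f : X ⟶ Y)
    [hsf : StrongEpi f] : Nonempty (RegularEpi f) := by
  obtain ⟨I, e, m, hfac, ⟨he⟩, hm⟩ := hreg.factor f
  haveI := he; haveI := hm
  haveI : StrongEpi (e ≫ m) := by rwa [← hfac]
  haveI : StrongEpi m := strongEpi_of_strongEpi e m
  haveI : IsIso m := isIso_of_mono_of_strongEpi m
  exact ⟨hfac ▸ regEpiCompIso e m he⟩

end Aux

/-- In a regular Mal'tsev category every split epimorphism of
`Ext(C)` is a double extension: given a commutative square of regular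
epimorphisms `a, b, f', f` with compatible sections `s'` of `f'` and `s` of `f`,
the comparison morphism `A' ⟶ A ×_B B'` is a regular epimorphism. -/
theorem statement_8 {C : Type u} [Category.{v} C] [HasFiniteLimits C]
    (hreg : IsRegularCategory C) (hmal : IsMaltsevCat C)
    {A' A B' B : C} (a : A' ⟶ A) (b : B' ⟶ B) (f' : A' ⟶ B') (f : A ⟶ B)
    (ha : Nonempty (RegularEpi a)) (hb : Nonempty (RegularEpi b))
    (hf' : Nonempty (RegularEpi f')) (hf : Nonempty (RegularEpi f))
    (s' : B' ⟶ A') (s : B ⟶ A)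
    (hs' : s' ≫ f' = 𝟙 B') (hs : s ≫ f = 𝟙 B)
    (hsq : f' ≫ b = a ≫ f) (hcomp : s' ≫ a = b ≫ s) :
    Nonempty (RegularEpi (pullback.lift a f' hsq.symm : A' ⟶ pullback f b)) := by
  -- notation
  set P := pullback f b
  set p₁ : P ⟶ A := pullback.fst f b with hp₁
  set p₂ : P ⟶ B' := pullback.snd f b with hp₂
  set c : A' ⟶ P := pullback.lift a f' hsq.symm with hc
  -- kernel pairs R = Eq(f'), S = Eq(a)
  set R := pullback f' f'
  set r₀ : R ⟶ A' := pullback.fst f' f' with hr₀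
  set r₁ : R ⟶ A' := pullback.snd f' f' with hr₁
  set S := pullback a a
  set s₀ : S ⟶ A' := pullback.fst a a with hs₀
  set s₁ : S ⟶ A' := pullback.snd a a with hs₁
  -- the composite span K = R ×_{A'} S
  set K := pullback r₁ s₀
  set kR : K ⟶ R := pullback.fst r₁ s₀ with hkR
  set kS : K ⟶ S := pullback.snd r₁ s₀ with hkS
  set e₀ : K ⟶ A' := kR ≫ r₀ with he₀
  set e₁ : K ⟶ A' := kS ≫ s₁ with he₁
  -- reflexivity of the span
  have diagR : A' ⟶ R := pullback.lift (𝟙 A') (𝟙 A') rfl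
  have diagS : A' ⟶ S := pullback.lift (𝟙 A') (𝟙 A') rfl
  set refl : A' ⟶ K :=
    pullback.lift (pullback.lift (𝟙 A') (𝟙 A') rfl) (pullback.lift (𝟙 A') (𝟙 A') rfl)
      (by rw [hr₁, hs₀, pullback.lift_snd, pullback.lift_fst]) with hrefl
  -- image factorisation of (e₀,e₁) : K → A' × A'
  obtain ⟨D, qD, m, hfac, ⟨hqD⟩, hm⟩ := hreg.factor (prod.lift e₀ e₁)
  haveI := hqD; haveI := hm
  set d₀ : D ⟶ A' := m ≫ prod.fst with hd₀
  set d₁ : D ⟶ A' := m ≫ prod.snd with hd₁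
  have hqd₀ : qD ≫ d₀ = e₀ := by
    rw [hd₀, ← Category.assoc, ← hfac, prod.lift_fst]
  have hqd₁ : qD ≫ d₁ = e₁ := by
    rw [hd₁, ← Category.assoc, ← hfac, prod.lift_snd]
  -- D is a reflexive relation
  have hreflrel : IsReflexiveRel d₀ d₁ := by
    constructor
    · intro T x y h0 h1
      have hxy : x ≫ m = y ≫ m := by
        apply Limits.prod.hom_ext
        · simpa [hd₀, Category.assoc] using h0
        · simpa [hd₁, Category.assoc] using h1
      exact (cancel_mono m).1 hxy
    · refine ⟨refl ≫ qD, ?_, ?_⟩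
      · rw [Category.assoc, hqd₀, hrefl, he₀, ← Category.assoc, pullback.lift_fst,
          pullback.lift_fst]
      · rw [Category.assoc, hqd₁, hrefl, he₁, ← Category.assoc, pullback.lift_snd,
          pullback.lift_snd]
  -- Mal'tsev: D is symmetric
  obtain ⟨-, ⟨σ, hσ0, hσ1⟩, -⟩ := hmal d₀ d₁ hreflrel
  -- first cover: choose a-preimages of the first component of P
  set T₁ := pullback a p₁
  set w : T₁ ⟶ A' := pullback.fst a p₁ with hw
  set ρ : T₁ ⟶ P := pullback.snd a p₁ with hρ
  obtain ⟨hρRE⟩ : Nonempty (RegularEpi ρ) :=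
    hreg.stable w ρ a p₁ (IsPullback.of_hasPullback a p₁) ha
  haveI := hρRE
  have hwa : w ≫ a = ρ ≫ p₁ := pullback.condition
  have hPcond : p₁ ≫ f = p₂ ≫ b := pullback.condition
  have hKcond : kR ≫ r₁ = kS ≫ s₀ := pullback.condition
  -- the element (w, s' ∘ p₂ ∘ ρ) of the composite relation
  have hκR : w ≫ f' = (w ≫ f' ≫ s') ≫ f' := by
    rw [Category.assoc, Category.assoc, hs', Category.comp_id]
  set κR : T₁ ⟶ R := pullback.lift w (w ≫ f' ≫ s') hκR with hκRdef
  have hfb : w ≫ f' ≫ b = ρ ≫ p₂ ≫ b := by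
    rw [hsq, ← Category.assoc, hwa, Category.assoc, hPcond]
  have hκS : (w ≫ f' ≫ s') ≫ a = (ρ ≫ p₂ ≫ s') ≫ a := by
    have h1 : s' ≫ a = b ≫ s := hcomp
    calc (w ≫ f' ≫ s') ≫ a = w ≫ f' ≫ (s' ≫ a) := by simp [Category.assoc]
      _ = w ≫ f' ≫ b ≫ s := by rw [h1]
      _ = (w ≫ f' ≫ b) ≫ s := by simp [Category.assoc]
      _ = (ρ ≫ p₂ ≫ b) ≫ s := by rw [hfb]
      _ = ρ ≫ p₂ ≫ (b ≫ s) := by simp [Category.assoc]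
      _ = ρ ≫ p₂ ≫ (s' ≫ a) := by rw [h1]
      _ = (ρ ≫ p₂ ≫ s') ≫ a := by simp [Category.assoc]
  set κS : T₁ ⟶ S := pullback.lift (w ≫ f' ≫ s') (ρ ≫ p₂ ≫ s') hκS with hκSdef
  set κ : T₁ ⟶ K := pullback.lift κR κS (by rw [hκRdef, hκSdef, hr₁, hs₀,
    pullback.lift_snd, pullback.lift_fst]) with hκdef
  have hκe₀ : κ ≫ e₀ = w := by
    rw [he₀, ← Category.assoc, hκdef, pullback.lift_fst, hκRdef, pullback.lift_fst]
  have hκe₁ : κ ≫ e₁ = ρ ≫ p₂ ≫ s' := by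
    rw [he₁, ← Category.assoc, hκdef, pullback.lift_snd, hκSdef, pullback.lift_snd]
  -- apply symmetry, then cover again by K
  set δ : T₁ ⟶ D := κ ≫ qD ≫ σ with hδ
  set T₂ := pullback qD δ
  set lam : T₂ ⟶ K := pullback.fst qD δ with hlam
  set τ : T₂ ⟶ T₁ := pullback.snd qD δ with hτ
  obtain ⟨hτRE⟩ : Nonempty (RegularEpi τ) :=
    hreg.stable lam τ qD δ (IsPullback.of_hasPullback qD δ) ⟨hqD⟩
  haveI := hτRE
  have hlq : lam ≫ qD = τ ≫ δ := pullback.condition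
  have hA : lam ≫ e₀ = τ ≫ ρ ≫ p₂ ≫ s' := by
    calc lam ≫ e₀ = lam ≫ qD ≫ d₀ := by rw [hqd₀]
      _ = (lam ≫ qD) ≫ d₀ := by rw [Category.assoc]
      _ = (τ ≫ δ) ≫ d₀ := by rw [hlq]
      _ = τ ≫ κ ≫ qD ≫ σ ≫ d₀ := by rw [hδ]; simp only [Category.assoc]
      _ = τ ≫ κ ≫ qD ≫ d₁ := by rw [hσ0]
      _ = τ ≫ κ ≫ e₁ := by rw [hqd₁]
      _ = τ ≫ ρ ≫ p₂ ≫ s' := by rw [hκe₁]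
  have hB : lam ≫ e₁ = τ ≫ w := by
    calc lam ≫ e₁ = lam ≫ qD ≫ d₁ := by rw [hqd₁]
      _ = (lam ≫ qD) ≫ d₁ := by rw [Category.assoc]
      _ = (τ ≫ δ) ≫ d₁ := by rw [hlq]
      _ = τ ≫ κ ≫ qD ≫ σ ≫ d₁ := by rw [hδ]; simp only [Category.assoc]
      _ = τ ≫ κ ≫ qD ≫ d₀ := by rw [hσ1]
      _ = τ ≫ κ ≫ e₀ := by rw [hqd₀]
      _ = τ ≫ w := by rw [hκe₀]
  -- the middle element provides the desired lift
  set z : T₂ ⟶ A' := lam ≫ kR ≫ r₁ with hz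
  have hzmid : lam ≫ kR ≫ r₁ = lam ≫ kS ≫ s₀ := by
    rw [hKcond]
  have hzf' : z ≫ f' = τ ≫ ρ ≫ p₂ := by
    have hRcond : r₀ ≫ f' = r₁ ≫ f' := pullback.condition
    calc z ≫ f' = lam ≫ kR ≫ (r₁ ≫ f') := by simp [hz, Category.assoc]
      _ = lam ≫ kR ≫ (r₀ ≫ f') := by rw [hRcond]
      _ = (lam ≫ e₀) ≫ f' := by simp [he₀, Category.assoc]
      _ = (τ ≫ ρ ≫ p₂ ≫ s') ≫ f' := by rw [hA]
      _ = τ ≫ ρ ≫ p₂ ≫ (s' ≫ f') := by simp [Category.assoc]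
      _ = τ ≫ ρ ≫ p₂ := by rw [hs', Category.comp_id]
  have hza : z ≫ a = τ ≫ ρ ≫ p₁ := by
    have hScond : s₀ ≫ a = s₁ ≫ a := pullback.condition
    calc z ≫ a = lam ≫ kS ≫ (s₀ ≫ a) := by rw [hz, hzmid]; simp [Category.assoc]
      _ = lam ≫ kS ≫ (s₁ ≫ a) := by rw [hScond]
      _ = (lam ≫ e₁) ≫ a := by simp [he₁, Category.assoc]
      _ = (τ ≫ w) ≫ a := by rw [hB]
      _ = τ ≫ (w ≫ a) := by simp [Category.assoc]
      _ = τ ≫ ρ ≫ p₁ := by rw [hwa]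
  -- z ≫ c = τ ≫ ρ, a regular (hence strong) epi, so c is a strong epi
  have hzc : z ≫ c = τ ≫ ρ := by
    apply pullback.hom_ext
    · rw [Category.assoc, hc, pullback.lift_fst, hza, Category.assoc]
    · rw [Category.assoc, hc, pullback.lift_snd, hzf', Category.assoc]
  haveI : StrongEpi (τ ≫ ρ) := by
    haveI := isRegularEpi_of_regularEpi hτRE; haveI := isRegularEpi_of_regularEpi hρRE
    exact strongEpi_comp τ ρ
  haveI : StrongEpi (z ≫ c) := by rwa [hzc]
  haveI : StrongEpi c := strongEpi_of_strongEpi z c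
  exact regEpi_of_strongEpi hreg c

end GaloisPaper
end

section
/- Let C be a Barr-exact Mal'tsev category and E the class of regular epimorphisms. Then every pushout square of regular epimorphisms in C is a double extension: the comparison morphism to the pullback is a regular epimorphism. -/
open CategoryTheory CategoryTheory.Limits

universe v u v' u'

namespace GaloisPaper

variable {C : Type u} [Category.{v} C]

section Statement9Aux

/-- Construct an `IsPullback` from explicit data. -/
lemma mkIsPullback {P X Y Z : C} {p₁ : P ⟶ X} {p₂ : P ⟶ Y} {f : X ⟶ Z} {g : Y ⟶ Z}
    (w : p₁ ≫ f = p₂ ≫ g)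
    (lift : ∀ {T : C} (u : T ⟶ X) (v : T ⟶ Y), u ≫ f = v ≫ g → (T ⟶ P))
    (fac₁ : ∀ {T : C} (u : T ⟶ X) (v : T ⟶ Y) (h : u ≫ f = v ≫ g), lift u v h ≫ p₁ = u)
    (fac₂ : ∀ {T : C} (u : T ⟶ X) (v : T ⟶ Y) (h : u ≫ f = v ≫ g), lift u v h ≫ p₂ = v)
    (uniq : ∀ {T : C} (x y : T ⟶ P), x ≫ p₁ = y ≫ p₁ → x ≫ p₂ = y ≫ p₂ → x = y) :
    IsPullback p₁ p₂ f g :=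
  IsPullback.of_isLimit (PullbackCone.IsLimit.mk w
    (fun s => lift s.fst s.snd s.condition)
    (fun s => fac₁ _ _ _) (fun s => fac₂ _ _ _)
    (fun s m hm₁ hm₂ => uniq _ _ (by rw [hm₁, fac₁]) (by rw [hm₂, fac₂])))

lemma isPullback_cancel_mono {P X Y Z Z' : C} {p₁ : P ⟶ X} {p₂ : P ⟶ Y} {f : X ⟶ Z} {g : Y ⟶ Z}
    (m : Z ⟶ Z') [Mono m] (h : IsPullback p₁ p₂ (f ≫ m) (g ≫ m)) : IsPullback p₁ p₂ f g := by
  refine mkIsPullback ((cancel_mono m).1 (by simpa using h.w))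
    (fun u v hw => h.lift u v (by rw [← Category.assoc, hw, Category.assoc]))
    (fun u v hw => h.lift_fst _ _ _) (fun u v hw => h.lift_snd _ _ _)
    (fun x y h1 h2 => h.hom_ext h1 h2)

lemma regularEpi_comp_isIso {X I Y : C} (e : X ⟶ I) (m : I ⟶ Y) (he : RegularEpi e)
    [IsIso m] : Nonempty (RegularEpi (e ≫ m)) := by
  haveI := RegularEpi.epi e he
  refine ⟨⟨he.W, he.left, he.right,
    by rw [← Category.assoc, ← Category.assoc, he.w], ?_⟩⟩
  refine Cofork.IsColimit.mk _
    (fun s => inv m ≫ (Cofork.IsColimit.desc' he.isColimit s.π s.condition).1)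
    (fun s => ?_) (fun s l hl => ?_)
  · have hd := (Cofork.IsColimit.desc' he.isColimit s.π s.condition).2
    simp only [Cofork.π_ofπ] at hd
    simp [hd]
  · have hd := (Cofork.IsColimit.desc' he.isColimit s.π s.condition).2
    simp only [Cofork.π_ofπ] at hd
    simp only [Cofork.π_ofπ] at hl
    rw [← cancel_epi (e ≫ m)]
    simp only [Category.assoc, IsIso.hom_inv_id_assoc]
    rw [hd]
    simpa using hl

lemma strongEpi_regular (hreg : IsRegularCategory C) {X Y : C} (f : X ⟶ Y) [StrongEpi f] :
    Nonempty (RegularEpi f) := by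
  obtain ⟨I, e, m, hfac, ⟨he⟩, hm⟩ := hreg.factor f
  haveI := he; haveI := hm
  have sq : CommSq e f m (𝟙 Y) := ⟨by rw [Category.comp_id, hfac]⟩
  haveI : HasLiftingProperty f m := StrongEpi.llp m
  have hlm : sq.lift ≫ m = 𝟙 Y := sq.fac_right
  have hml : m ≫ sq.lift = 𝟙 I := by
    rw [← cancel_mono m, Category.assoc, hlm, Category.comp_id, Category.id_comp]
  haveI : IsIso m := ⟨sq.lift, hml, hlm⟩
  rw [hfac]
  exact regularEpi_comp_isIso e m he

lemma regEpi_comp (hreg : IsRegularCategory C) {X Y Z : C} (f : X ⟶ Y) (g : Y ⟶ Z)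
    (hf : Nonempty (RegularEpi f)) (hg : Nonempty (RegularEpi g)) :
    Nonempty (RegularEpi (f ≫ g)) := by
  obtain ⟨hf⟩ := hf; obtain ⟨hg⟩ := hg
  haveI : IsRegularEpi f := ⟨⟨hf⟩⟩; haveI : IsRegularEpi g := ⟨⟨hg⟩⟩
  haveI : StrongEpi (f ≫ g) := strongEpi_comp f g
  exact strongEpi_regular hreg _

lemma regEpi_of_comp (hreg : IsRegularCategory C) {X Y Z : C} (f : X ⟶ Y) (g : Y ⟶ Z)
    (h : Nonempty (RegularEpi (f ≫ g))) : Nonempty (RegularEpi g) := by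
  obtain ⟨I, e', m, hfac, ⟨he'⟩, hm⟩ := hreg.factor g
  obtain ⟨hfg⟩ := h
  haveI := he'; haveI := hm
  haveI : Epi (f ≫ g) := RegularEpi.epi _ hfg
  have hcoeq : hfg.left ≫ (f ≫ e') = hfg.right ≫ (f ≫ e') := by
    have hw := hfg.w
    rw [← cancel_mono m]
    simp only [Category.assoc, ← hfac]
    simpa using hw
  obtain ⟨k, hk'⟩ := Cofork.IsColimit.desc' hfg.isColimit (f ≫ e') hcoeq
  have hk : (f ≫ g) ≫ k = f ≫ e' := by simpa using hk'
  have hkm : k ≫ m = 𝟙 Z := by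
    rw [← cancel_epi (f ≫ g), ← Category.assoc, hk, Category.assoc, ← hfac,
      Category.comp_id]
  have hmk : m ≫ k = 𝟙 I := by
    rw [← cancel_mono m, Category.assoc, hkm, Category.comp_id, Category.id_comp]
  haveI : IsIso m := ⟨k, hmk, hkm⟩
  rw [hfac]
  exact regularEpi_comp_isIso e' m he'

lemma desc_of_kernelPair {A B W : C} (p : A ⟶ B) (hp : RegularEpi p) {R : C} {t₀ t₁ : R ⟶ A}
    (hkp : IsPullback t₀ t₁ p p) (z : A ⟶ W) (hz : t₀ ≫ z = t₁ ≫ z) :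
    ∃ g : B ⟶ W, p ≫ g = z := by
  have h1 : hkp.lift hp.left hp.right hp.w ≫ t₀ = hp.left := hkp.lift_fst _ _ _
  have h2 : hkp.lift hp.left hp.right hp.w ≫ t₁ = hp.right := hkp.lift_snd _ _ _
  have hw : hp.left ≫ z = hp.right ≫ z := by
    have h3 : (hkp.lift hp.left hp.right hp.w ≫ t₀) ≫ z =
        (hkp.lift hp.left hp.right hp.w ≫ t₁) ≫ z := by
      rw [Category.assoc, Category.assoc, hz]
    rw [h1, h2] at h3
    exact h3
  obtain ⟨g, hg⟩ := Cofork.IsColimit.desc' hp.isColimit z hw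
  exact ⟨g, by simpa using hg⟩


end Statement9Aux

/-- In a Barr-exact Mal'tsev category every pushout square of regular
epimorphisms is a double extension: the comparison morphism to the pullback is a
regular epimorphism. -/
theorem statement_9 {C : Type u} [Category.{v} C] [HasFiniteLimits C]
    (hex : IsBarrExact C) (hmal : IsMaltsevCat C)
    {A' A B' B : C} (a : A' ⟶ A) (b : B' ⟶ B) (f' : A' ⟶ B') (f : A ⟶ B)
    (ha : Nonempty (RegularEpi a)) (hb : Nonempty (RegularEpi b))
    (hf' : Nonempty (RegularEpi f')) (hf : Nonempty (RegularEpi f))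
    (hsq : a ≫ f = f' ≫ b) (hpo : IsPushout a f' f b) :
    Nonempty (RegularEpi (pullback.lift a f' hsq : A' ⟶ pullback f b)) := by
  obtain ⟨ha'⟩ := ha; obtain ⟨hb'⟩ := hb; obtain ⟨hf''⟩ := hf'; obtain ⟨hfr⟩ := hf
  haveI := ha'; haveI := hb'; haveI := hf''; haveI := hfr
  haveI := RegularEpi.epi a ha'; haveI := RegularEpi.epi f' hf''
  -- kernel pair of `a`
  obtain ⟨R, r₀, r₁, hRpb, ρa, hρa₀, hρa₁⟩ :
      ∃ (R : C) (r₀ r₁ : R ⟶ A'), IsPullback r₀ r₁ a a ∧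
        ∃ ρ : A' ⟶ R, ρ ≫ r₀ = 𝟙 A' ∧ ρ ≫ r₁ = 𝟙 A' :=
    ⟨pullback a a, pullback.fst a a, pullback.snd a a, IsPullback.of_hasPullback a a,
      pullback.lift (𝟙 A') (𝟙 A') rfl, pullback.lift_fst _ _ _, pullback.lift_snd _ _ _⟩
  -- kernel pair of `f'`
  obtain ⟨S, s₀, s₁, hSpb, ρs, hρs₀, hρs₁⟩ :
      ∃ (S : C) (s₀ s₁ : S ⟶ A'), IsPullback s₀ s₁ f' f' ∧
        ∃ ρ : A' ⟶ S, ρ ≫ s₀ = 𝟙 A' ∧ ρ ≫ s₁ = 𝟙 A' :=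
    ⟨pullback f' f', pullback.fst f' f', pullback.snd f' f', IsPullback.of_hasPullback f' f',
      pullback.lift (𝟙 A') (𝟙 A') rfl, pullback.lift_fst _ _ _, pullback.lift_snd _ _ _⟩
  -- the composite relation object
  obtain ⟨D, df, ds, hDpb⟩ : ∃ (D : C) (df : D ⟶ R) (ds : D ⟶ S), IsPullback df ds r₁ s₀ :=
    ⟨pullback r₁ s₀, pullback.fst r₁ s₀, pullback.snd r₁ s₀, IsPullback.of_hasPullback r₁ s₀⟩
  -- image of `D` in `A' × A'`
  obtain ⟨T, e, mT, hfacT, ⟨he⟩, hmT⟩ := hex.1.factor (prod.lift (df ≫ r₀) (ds ≫ s₁))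
  haveI := he; haveI := hmT
  haveI := RegularEpi.epi e he
  obtain ⟨t₀, t₁, het₀, het₁, hjm⟩ :
      ∃ (t₀ t₁ : T ⟶ A'), e ≫ t₀ = df ≫ r₀ ∧ e ≫ t₁ = ds ≫ s₁ ∧ JointlyMono t₀ t₁ := by
    refine ⟨mT ≫ prod.fst, mT ≫ prod.snd, ?_, ?_, ?_⟩
    · rw [← Category.assoc, ← hfacT, prod.lift_fst]
    · rw [← Category.assoc, ← hfacT, prod.lift_snd]
    · intro T' x y h0 h1
      rw [← Category.assoc, ← Category.assoc] at h0 h1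
      exact (cancel_mono mT).1 (Limits.prod.hom_ext h0 h1)
  -- the relation `(t₀, t₁)` is reflexive
  have hrefl : ∃ r : A' ⟶ T, r ≫ t₀ = 𝟙 A' ∧ r ≫ t₁ = 𝟙 A' := by
    refine ⟨hDpb.lift ρa ρs (by rw [hρa₁, hρs₀]) ≫ e, ?_, ?_⟩
    · rw [Category.assoc, het₀, ← Category.assoc, hDpb.lift_fst, hρa₀]
    · rw [Category.assoc, het₁, ← Category.assoc, hDpb.lift_snd, hρs₁]
  -- by the Mal'tsev property and exactness, it is a kernel pair
  obtain ⟨Q₀, q₀, hpb₀⟩ := hex.2 t₀ t₁ (hmal t₀ t₁ ⟨hjm, hrefl⟩)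
  obtain ⟨Q, q, m₀, hq₀, ⟨hq⟩, hm₀⟩ := hex.1.factor q₀
  haveI := hq; haveI := hm₀
  haveI := RegularEpi.epi q hq
  rw [hq₀] at hpb₀
  have hpbq : IsPullback t₀ t₁ q q := isPullback_cancel_mono m₀ hpb₀
  have htq : t₀ ≫ q = t₁ ≫ q := hpbq.w
  have hdq : (df ≫ r₀) ≫ q = (ds ≫ s₁) ≫ q := by
    rw [← het₀, ← het₁, Category.assoc, Category.assoc, htq]
  -- `q` coequalizes the kernel pair of `a`
  have hrq : r₀ ≫ q = r₁ ≫ q := by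
    obtain ⟨j, hj₁, hj₂⟩ : ∃ j : R ⟶ D, j ≫ df = 𝟙 R ∧ j ≫ ds = r₁ ≫ ρs :=
      ⟨hDpb.lift (𝟙 R) (r₁ ≫ ρs)
        (by rw [Category.id_comp, Category.assoc, hρs₀, Category.comp_id]),
        hDpb.lift_fst _ _ _, hDpb.lift_snd _ _ _⟩
    have h5 : (r₁ ≫ ρs) ≫ s₁ = r₁ := by rw [Category.assoc, hρs₁, Category.comp_id]
    have h6 := congrArg (fun z => j ≫ z) hdq
    simp only [← Category.assoc] at h6
    rw [hj₁, hj₂, Category.id_comp, h5] at h6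
    exact h6
  -- `q` coequalizes the kernel pair of `f'`
  have hsq2 : s₀ ≫ q = s₁ ≫ q := by
    obtain ⟨j, hj₁, hj₂⟩ : ∃ j : S ⟶ D, j ≫ df = s₀ ≫ ρa ∧ j ≫ ds = 𝟙 S :=
      ⟨hDpb.lift (s₀ ≫ ρa) (𝟙 S)
        (by rw [Category.id_comp, Category.assoc, hρa₁, Category.comp_id]),
        hDpb.lift_fst _ _ _, hDpb.lift_snd _ _ _⟩
    have h5 : (s₀ ≫ ρa) ≫ r₀ = s₀ := by rw [Category.assoc, hρa₀, Category.comp_id]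
    have h6 := congrArg (fun z => j ≫ z) hdq
    simp only [← Category.assoc] at h6
    rw [hj₁, hj₂, Category.id_comp, h5] at h6
    exact h6
  obtain ⟨g, hg⟩ := desc_of_kernelPair a ha' hRpb q hrq
  obtain ⟨h', hh'⟩ := desc_of_kernelPair f' hf'' hSpb q hsq2
  -- `a ≫ f` coequalizes `(t₀, t₁)`
  have hdaf : (df ≫ r₀) ≫ (a ≫ f) = (ds ≫ s₁) ≫ (a ≫ f) := by
    calc (df ≫ r₀) ≫ a ≫ f = df ≫ (r₀ ≫ a) ≫ f := by simp only [Category.assoc]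
      _ = df ≫ (r₁ ≫ a) ≫ f := by rw [hRpb.w]
      _ = (df ≫ r₁) ≫ a ≫ f := by simp only [Category.assoc]
      _ = (ds ≫ s₀) ≫ a ≫ f := by rw [hDpb.w]
      _ = (ds ≫ s₀) ≫ f' ≫ b := by rw [hsq]
      _ = ds ≫ (s₀ ≫ f') ≫ b := by simp only [Category.assoc]
      _ = ds ≫ (s₁ ≫ f') ≫ b := by rw [hSpb.w]
      _ = (ds ≫ s₁) ≫ f' ≫ b := by simp only [Category.assoc]
      _ = (ds ≫ s₁) ≫ a ≫ f := by rw [hsq]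
  have htaf : t₀ ≫ (a ≫ f) = t₁ ≫ (a ≫ f) := by
    rw [← cancel_epi e, ← Category.assoc e t₀ (a ≫ f), ← Category.assoc e t₁ (a ≫ f),
      het₀, het₁, hdaf]
  obtain ⟨χ, hχ⟩ := desc_of_kernelPair q hq hpbq (a ≫ f) htaf
  have hgχ : g ≫ χ = f := by
    rw [← cancel_epi a, ← Category.assoc, hg, hχ]
  have hh'χ : h' ≫ χ = b := by
    rw [← cancel_epi f', ← Category.assoc, hh', hχ, hsq]
  obtain ⟨ψ, hψ₁, hψ₂⟩ : ∃ ψ : B ⟶ Q, f ≫ ψ = g ∧ b ≫ ψ = h' :=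
    ⟨hpo.desc g h' (hg.trans hh'.symm), hpo.inl_desc _ _ _, hpo.inr_desc _ _ _⟩
  have hχψ : χ ≫ ψ = 𝟙 Q := by
    rw [← cancel_epi q, ← Category.assoc, hχ, Category.comp_id, Category.assoc, hψ₁, hg]
  have hψχ : ψ ≫ χ = 𝟙 B :=
    hpo.hom_ext (by rw [← Category.assoc, hψ₁, hgχ, Category.comp_id])
      (by rw [← Category.assoc, hψ₂, hh'χ, Category.comp_id])
  haveI : IsIso χ := ⟨ψ, hχψ, hψχ⟩
  -- the pullback of `a ≫ f` and `b` is also the pullback of `q` and `h'`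
  have hWQ : IsPullback (pullback.fst (a ≫ f) b) (pullback.snd (a ≫ f) b) q h' := by
    refine mkIsPullback ?_
      (fun u v huv => pullback.lift u v
        (by rw [← hχ, ← Category.assoc, huv, Category.assoc, hh'χ]))
      (fun u v huv => pullback.lift_fst _ _ _)
      (fun u v huv => pullback.lift_snd _ _ _)
      (fun x y h1 h2 => pullback.hom_ext h1 h2)
    rw [← cancel_mono χ, Category.assoc, hχ, Category.assoc, hh'χ]
    exact pullback.condition
  obtain ⟨τ, hτ₁, hτ₂⟩ : ∃ τ : T ⟶ pullback (a ≫ f) b,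
      τ ≫ pullback.fst (a ≫ f) b = t₀ ∧ τ ≫ pullback.snd (a ≫ f) b = t₁ ≫ f' :=
    ⟨pullback.lift t₀ (t₁ ≫ f') (by rw [htaf, hsq, Category.assoc]),
      pullback.lift_fst _ _ _, pullback.lift_snd _ _ _⟩
  -- `τ` is a pullback of `f'`, hence a regular epi
  have hτpb : IsPullback t₁ τ f' (pullback.snd (a ≫ f) b) := by
    refine mkIsPullback (by rw [hτ₂])
      (fun u v huv => hpbq.lift (v ≫ pullback.fst (a ≫ f) b) u
        (by rw [Category.assoc, hWQ.w, ← Category.assoc, ← huv, Category.assoc, hh']))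
      (fun u v huv => hpbq.lift_snd _ _ _)
      (fun u v huv => pullback.hom_ext
        (by rw [Category.assoc, hτ₁, hpbq.lift_fst])
        (by rw [Category.assoc, hτ₂, ← Category.assoc, hpbq.lift_snd, huv]))
      (fun x y h1 h2 => hpbq.hom_ext
        (by rw [← hτ₁, ← Category.assoc, ← Category.assoc, h2]) h1)
  have hτre := hex.1.stable t₁ τ f' (pullback.snd (a ≫ f) b) hτpb ⟨hf''⟩
  -- the comparison from the big pullback to `pullback f b` is a pullback of `a`
  obtain ⟨w, hw₁, hw₂⟩ : ∃ w : pullback (a ≫ f) b ⟶ pullback f b,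
      w ≫ pullback.fst f b = pullback.fst (a ≫ f) b ≫ a ∧
      w ≫ pullback.snd f b = pullback.snd (a ≫ f) b :=
    ⟨pullback.lift (pullback.fst (a ≫ f) b ≫ a) (pullback.snd (a ≫ f) b)
      (by rw [Category.assoc]; exact pullback.condition),
      pullback.lift_fst _ _ _, pullback.lift_snd _ _ _⟩
  have hwpb : IsPullback (pullback.fst (a ≫ f) b) w a (pullback.fst f b) := by
    refine mkIsPullback (by rw [hw₁])
      (fun u v huv => pullback.lift u (v ≫ pullback.snd f b)
        (by rw [← Category.assoc, huv, Category.assoc, Category.assoc, pullback.condition]))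
      (fun u v huv => pullback.lift_fst _ _ _)
      (fun u v huv => pullback.hom_ext
        (by rw [Category.assoc, hw₁, ← Category.assoc, pullback.lift_fst, huv])
        (by rw [Category.assoc, hw₂, pullback.lift_snd]))
      (fun x y h1 h2 => pullback.hom_ext h1
        (by rw [← hw₂, ← Category.assoc, ← Category.assoc, h2]))
  have hwre := hex.1.stable (pullback.fst (a ≫ f) b) w a (pullback.fst f b) hwpb ⟨ha'⟩
  have hcomp : Nonempty (RegularEpi (e ≫ τ ≫ w)) :=
    regEpi_comp hex.1 e (τ ≫ w) ⟨he⟩ (regEpi_comp hex.1 τ w hτre hwre)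
  have heq : e ≫ τ ≫ w = (df ≫ r₁) ≫ pullback.lift a f' hsq := by
    apply pullback.hom_ext
    · calc (e ≫ τ ≫ w) ≫ pullback.fst f b
          = e ≫ τ ≫ (w ≫ pullback.fst f b) := by simp only [Category.assoc]
        _ = e ≫ τ ≫ pullback.fst (a ≫ f) b ≫ a := by rw [hw₁]
        _ = (e ≫ (τ ≫ pullback.fst (a ≫ f) b)) ≫ a := by simp only [Category.assoc]
        _ = (e ≫ t₀) ≫ a := by rw [hτ₁]
        _ = (df ≫ r₀) ≫ a := by rw [het₀]
        _ = df ≫ r₀ ≫ a := by simp only [Category.assoc]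
        _ = df ≫ r₁ ≫ a := by rw [hRpb.w]
        _ = (df ≫ r₁) ≫ a := by simp only [Category.assoc]
        _ = ((df ≫ r₁) ≫ pullback.lift a f' hsq) ≫ pullback.fst f b := by
            simp only [Category.assoc, pullback.lift_fst]
    · calc (e ≫ τ ≫ w) ≫ pullback.snd f b
          = e ≫ τ ≫ (w ≫ pullback.snd f b) := by simp only [Category.assoc]
        _ = e ≫ (τ ≫ pullback.snd (a ≫ f) b) := by rw [hw₂]
        _ = e ≫ t₁ ≫ f' := by rw [hτ₂]
        _ = (e ≫ t₁) ≫ f' := by simp only [Category.assoc]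
        _ = (ds ≫ s₁) ≫ f' := by rw [het₁]
        _ = ds ≫ s₁ ≫ f' := by simp only [Category.assoc]
        _ = ds ≫ s₀ ≫ f' := by rw [hSpb.w]
        _ = (ds ≫ s₀) ≫ f' := by simp only [Category.assoc]
        _ = (df ≫ r₁) ≫ f' := by rw [hDpb.w]
        _ = ((df ≫ r₁) ≫ pullback.lift a f' hsq) ≫ pullback.snd f b := by
            simp only [Category.assoc, pullback.lift_snd]
  exact regEpi_of_comp hex.1 (df ≫ r₁) (pullback.lift a f' hsq) (heq ▸ hcomp)


end GaloisPaper
end
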